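/- arXiv:2307.07804 — 5 statements merged into one kernel-verified Lean document; each statement's English description precedes it below -/
import Mathlib

section
/- For all ℓ, j with r ≤ ℓ ≤ j ≤ n one has, in H(χ): Y_j * Y_ℓ = Y_ℓ * Y_j = p^{n−j} · Y_ℓ. -/
noncomputable section

/-- `y(t) = (1,0;t,1)` as an element of `GL₂(R)`. -/
def yG {R : Type*} [CommRing R] (t : R) : GL (Fin 2) R :=
  ⟨!![1, 0; t, 1], !![1, 0; -t, 1],
   by ext i j; fin_cases i <;> fin_cases j <;> simp [Matrix.mul_apply, Fin.sum_univ_two],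
   by ext i j; fin_cases i <;> fin_cases j <;> simp [Matrix.mul_apply, Fin.sum_univ_two]⟩

/-- Membership in the subgroup `B` of invertible upper triangular matrices. -/
def inB {R : Type*} [CommRing R] (g : GL (Fin 2) R) : Prop :=
  (g : Matrix (Fin 2) (Fin 2) R) 1 0 = 0

/-- `χ_B(b) = χ(d_b)`, where `d_b` is the `(2,2)`-entry of `b` (for `b ∈ B` this entry is a
unit; the function is extended by `0` elsewhere). -/
def chiB {R : Type*} [CommRing R] (χ : Rˣ →* ℂˣ) (g : GL (Fin 2) R) : ℂ :=
  letI := Classical.dec (IsUnit ((g : Matrix (Fin 2) (Fin 2) R) 1 1))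
  if h : IsUnit ((g : Matrix (Fin 2) (Fin 2) R) 1 1) then (χ h.unit : ℂ) else 0

/-- `|B|`. -/
def cardB (R : Type*) [CommRing R] : ℕ := Nat.card {g : GL (Fin 2) R // inB g}

/-- Convolution `(f*g)(x) = |B|⁻¹ Σ_{y∈G} f(y) g(y⁻¹x)`. -/
def conv {R : Type*} [CommRing R] [Fintype R] [DecidableEq R]
    (f g : GL (Fin 2) R → ℂ) : GL (Fin 2) R → ℂ :=
  fun x => (cardB R : ℂ)⁻¹ * ∑ y : GL (Fin 2) R, f y * g (y⁻¹ * x)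

/-- Membership in the Hecke algebra `H(χ)` of `χ_B`-bi-equivariant functions on `G`. -/
def memH {R : Type*} [CommRing R] (χ : Rˣ →* ℂˣ) (f : GL (Fin 2) R → ℂ) : Prop :=
  ∀ b x b' : GL (Fin 2) R, inB b → inB b' →
    f (b * x * b') = chiB χ b * chiB χ b' * f x

/-- `V_j`: the unique element of `H(χ)` vanishing off the double coset `B y_j B` with
`V_j(y_j) = 1`, where `y_j = (1,0;p^j,1)`. -/
def isV (p n : ℕ) (χ : (ZMod (p ^ n))ˣ →* ℂˣ) (j : ℕ)
    (V : GL (Fin 2) (ZMod (p ^ n)) → ℂ) : Prop :=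
  memH χ V ∧
  (∀ x : GL (Fin 2) (ZMod (p ^ n)),
      (¬ ∃ b b' : GL (Fin 2) (ZMod (p ^ n)), inB b ∧ inB b' ∧
          x = b * yG ((p : ZMod (p ^ n)) ^ j) * b') → V x = 0) ∧
  V (yG ((p : ZMod (p ^ n)) ^ j)) = 1

/-- `χ` has conductor `p^r`: trivial on units `≡ 1 (mod p^r)`, nontrivial on units
`≡ 1 (mod p^{r−1})`. -/
def hasConductor (p n r : ℕ) (χ : (ZMod (p ^ n))ˣ →* ℂˣ) : Prop :=
  (∀ u : (ZMod (p ^ n))ˣ, (p : ZMod (p ^ n)) ^ r ∣ ((u : ZMod (p ^ n)) - 1) → χ u = 1) ∧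
  ∃ u : (ZMod (p ^ n))ˣ, (p : ZMod (p ^ n)) ^ (r - 1) ∣ ((u : ZMod (p ^ n)) - 1) ∧ χ u ≠ 1

set_option linter.unusedSectionVars false
set_option linter.unusedVariables false
set_option maxHeartbeats 1000000

namespace Stmt8Aux

/-! ### Generic lemmas over a commutative ring -/

section General
variable {R : Type*} [CommRing R]

lemma entry_mul (g h : GL (Fin 2) R) (i j : Fin 2) :
    ((g * h : GL (Fin 2) R) : Matrix (Fin 2) (Fin 2) R) i j
      = (g : Matrix (Fin 2) (Fin 2) R) i 0 * (h : Matrix (Fin 2) (Fin 2) R) 0 j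
        + (g : Matrix (Fin 2) (Fin 2) R) i 1 * (h : Matrix (Fin 2) (Fin 2) R) 1 j := by
  rw [Units.val_mul, Matrix.mul_apply, Fin.sum_univ_two]

lemma isUnit_det2 (g : GL (Fin 2) R) :
    IsUnit ((g : Matrix (Fin 2) (Fin 2) R) 0 0 * (g : Matrix (Fin 2) (Fin 2) R) 1 1
      - (g : Matrix (Fin 2) (Fin 2) R) 0 1 * (g : Matrix (Fin 2) (Fin 2) R) 1 0) := by
  have h : IsUnit ((g : Matrix (Fin 2) (Fin 2) R)) := g.isUnit
  rw [Matrix.isUnit_iff_isUnit_det, Matrix.det_fin_two] at h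
  exact h

/-- `chi'`: `χ` extended by zero to non-units. -/
def chi' (χ : Rˣ →* ℂˣ) (a : R) : ℂ :=
  letI := Classical.dec (IsUnit a)
  if h : IsUnit a then (χ h.unit : ℂ) else 0

lemma chiB_eq (χ : Rˣ →* ℂˣ) (g : GL (Fin 2) R) :
    chiB χ g = chi' χ ((g : Matrix (Fin 2) (Fin 2) R) 1 1) := rfl

lemma chi'_not_isUnit (χ : Rˣ →* ℂˣ) {a : R} (h : ¬ IsUnit a) : chi' χ a = 0 := by
  simp only [chi', dif_neg h]

lemma chi'_unit (χ : Rˣ →* ℂˣ) (u : Rˣ) : chi' χ (u : R) = (χ u : ℂ) := by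
  have h : IsUnit (u : R) := u.isUnit
  simp only [chi', dif_pos h]
  congr 2
  exact Units.ext h.unit_spec

lemma chi'_mul (χ : Rˣ →* ℂˣ) {a b : R} (ha : IsUnit a) (hb : IsUnit b) :
    chi' χ (a * b) = chi' χ a * chi' χ b := by
  obtain ⟨u, rfl⟩ := ha
  obtain ⟨v, rfl⟩ := hb
  rw [← Units.val_mul, chi'_unit, chi'_unit, chi'_unit, map_mul, Units.val_mul]

/-- the `(2,1)` entry of a product of GL₂'s. -/
lemma c_mul (g h : GL (Fin 2) R) :
    ((g * h : GL (Fin 2) R) : Matrix (Fin 2) (Fin 2) R) 1 0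
      = (g : Matrix (Fin 2) (Fin 2) R) 1 0 * (h : Matrix (Fin 2) (Fin 2) R) 0 0
        + (g : Matrix (Fin 2) (Fin 2) R) 1 1 * (h : Matrix (Fin 2) (Fin 2) R) 1 0 :=
  entry_mul g h 1 0

lemma d_mul (g h : GL (Fin 2) R) :
    ((g * h : GL (Fin 2) R) : Matrix (Fin 2) (Fin 2) R) 1 1
      = (g : Matrix (Fin 2) (Fin 2) R) 1 0 * (h : Matrix (Fin 2) (Fin 2) R) 0 1
        + (g : Matrix (Fin 2) (Fin 2) R) 1 1 * (h : Matrix (Fin 2) (Fin 2) R) 1 1 :=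
  entry_mul g h 1 1

/-- diagonal element of `B`. -/
def dG (w : Rˣ) : GL (Fin 2) R :=
  ⟨!![(w : R), 0; 0, 1], !![((w⁻¹ : Rˣ) : R), 0; 0, 1],
   by ext i j; fin_cases i <;> fin_cases j <;>
     simp [Matrix.mul_apply, Fin.sum_univ_two],
   by ext i j; fin_cases i <;> fin_cases j <;>
     simp [Matrix.mul_apply, Fin.sum_univ_two]⟩

lemma yG_inv (t : R) : (yG t)⁻¹ = yG (-t) := by
  apply Units.ext
  show (yG t).inv = _
  ext i j
  fin_cases i <;> fin_cases j <;> rfl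

lemma dG_inv (w : Rˣ) : (dG w)⁻¹ = dG w⁻¹ := by
  apply Units.ext
  show (dG w).inv = _
  ext i j
  fin_cases i <;> fin_cases j <;> rfl

end General

/-! ### ZMod (p^n) arithmetic -/

variable {p n r : ℕ} [Fact p.Prime]

lemma pi_pow_n_eq_zero (hn : 1 ≤ n) : (p : ZMod (p ^ n)) ^ n = 0 := by
  have : ((p ^ n : ℕ) : ZMod (p ^ n)) = 0 := ZMod.natCast_self _
  push_cast at this
  exact this

lemma pi_nilpotent (hn : 1 ≤ n) : IsNilpotent (p : ZMod (p ^ n)) := ⟨n, pi_pow_n_eq_zero hn⟩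

lemma isUnit_of_p_dvd_sub (hn : 1 ≤ n) {a b : ZMod (p ^ n)} (ha : IsUnit a)
    (h : (p : ZMod (p ^ n)) ∣ a - b) : IsUnit b := by
  obtain ⟨t, ht⟩ := h
  have hb : b = (-(p * t)) + a := by linear_combination -ht
  rw [hb]
  exact IsNilpotent.isUnit_add_right_of_commute
    (((Commute.all ((p : ZMod (p^n))) t).isNilpotent_mul_right (pi_nilpotent hn)).neg)
    ha (Commute.all _ _)

lemma pi_pow_dvd_iff (hn : 1 ≤ n) {i : ℕ} (hi : i ≤ n) (c : ZMod (p ^ n)) :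
    (p : ZMod (p ^ n)) ^ i ∣ c ↔ p ^ i ∣ c.val := by
  haveI : NeZero (p ^ n) := ⟨pow_ne_zero _ (Fact.out (p := p.Prime)).ne_zero⟩
  constructor
  · rintro ⟨t, ht⟩
    have h1 : c = ((p ^ i * t.val : ℕ) : ZMod (p ^ n)) := by
      push_cast
      rw [ZMod.natCast_val, ZMod.cast_id]
      exact ht
    have h2 : c.val = (p ^ i * t.val) % p ^ n := by rw [h1, ZMod.val_natCast]
    rw [h2]
    exact (Nat.dvd_mod_iff (pow_dvd_pow p hi)).mpr ⟨t.val, rfl⟩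
  · rintro ⟨k, hk⟩
    have h1 : c = ((c.val : ℕ) : ZMod (p ^ n)) := by rw [ZMod.natCast_val, ZMod.cast_id]
    rw [h1, hk]
    push_cast
    exact ⟨(k : ZMod (p ^ n)), rfl⟩

lemma exists_val (hn : 1 ≤ n) {ℓ : ℕ} (hℓ : ℓ ≤ n) (c : ZMod (p ^ n))
    (hdvd : (p : ZMod (p ^ n)) ^ ℓ ∣ c) :
    ∃ i, ℓ ≤ i ∧ i ≤ n ∧ ∃ u : (ZMod (p ^ n))ˣ, c = (p : ZMod (p ^ n)) ^ i * u := by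
  haveI : NeZero (p ^ n) := ⟨pow_ne_zero _ (Fact.out (p := p.Prime)).ne_zero⟩
  have hp : p.Prime := Fact.out
  by_cases hc : c = 0
  · refine ⟨n, hℓ, le_refl n, 1, ?_⟩
    rw [hc, Units.val_one, mul_one, pi_pow_n_eq_zero hn]
  · have hcv : c.val ≠ 0 := by
      intro h0
      apply hc
      have : c = ((c.val : ℕ) : ZMod (p ^ n)) := by rw [ZMod.natCast_val, ZMod.cast_id]
      rw [this, h0]; simp
    set v := c.val.factorization p with hv
    set m := c.val / p ^ v with hm
    have hfac : p ^ v * m = c.val := Nat.ordProj_mul_ordCompl_eq_self c.val p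
    have hpm : ¬ p ∣ m := Nat.not_dvd_ordCompl hp hcv
    have hvn : v ≤ n := by
      by_contra hvn
      push_neg at hvn
      have h1 : p ^ v ≤ c.val := Nat.le_of_dvd (Nat.pos_of_ne_zero hcv) (Nat.ordProj_dvd _ _)
      have h2 : c.val < p ^ n := ZMod.val_lt c
      have := lt_of_le_of_lt h1 h2
      exact absurd (Nat.pow_lt_pow_iff_right hp.one_lt |>.mp this) (by omega)
    have hℓv : ℓ ≤ v := by
      have hdn : p ^ ℓ ∣ c.val := (pi_pow_dvd_iff hn hℓ c).mp hdvd
      have hcop : Nat.Coprime (p ^ ℓ) m :=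
        Nat.Coprime.pow_left _ ((hp.coprime_iff_not_dvd).mpr hpm)
      have : p ^ ℓ ∣ p ^ v := hcop.dvd_of_dvd_mul_right (hfac ▸ hdn)
      exact (Nat.pow_dvd_pow_iff_le_right hp.one_lt).mp this
    have hum : IsUnit ((m : ℕ) : ZMod (p ^ n)) := by
      rw [ZMod.isUnit_iff_coprime]
      exact Nat.Coprime.pow_right _ (Nat.coprime_comm.mp ((hp.coprime_iff_not_dvd).mpr hpm))
    refine ⟨v, hℓv, hvn, hum.unit, ?_⟩
    have : c = ((p ^ v * m : ℕ) : ZMod (p ^ n)) := by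
      rw [hfac, ZMod.natCast_val, ZMod.cast_id]
    rw [this]
    push_cast
    rw [IsUnit.unit_spec]

lemma val_unique (hn : 1 ≤ n) {i i' : ℕ} (hi : i ≤ n) (hi' : i' ≤ n)
    {c : ZMod (p ^ n)} {u u' : (ZMod (p ^ n))ˣ}
    (h : c = (p : ZMod (p ^ n)) ^ i * u) (h' : c = (p : ZMod (p ^ n)) ^ i' * u') : i = i' := by
  have hp : p.Prime := Fact.out
  by_contra hne
  wlog hlt : i < i' generalizing i i' u u'
  · exact this hi' hi h' h (Ne.symm hne) (by omega)
  have key : (p : ZMod (p ^ n)) ^ i * (u - (p : ZMod (p ^ n)) ^ (i' - i) * u') = 0 := by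
    have : (p : ZMod (p ^ n)) ^ i * ((p : ZMod (p ^ n)) ^ (i' - i) * u') =
        (p : ZMod (p ^ n)) ^ i' * u' := by
      rw [← mul_assoc, ← pow_add]
      congr 2
      omega
    rw [mul_sub, this, ← h, ← h', sub_self]
  have hunit : IsUnit ((u : ZMod (p ^ n)) - (p : ZMod (p ^ n)) ^ (i' - i) * u') := by
    apply isUnit_of_p_dvd_sub hn u.isUnit
    refine ⟨(p : ZMod (p ^ n)) ^ (i' - i - 1) * u', ?_⟩
    have hps : ((p : ZMod (p ^ n))) ^ (i' - i)
        = (p : ZMod (p ^ n)) * (p : ZMod (p ^ n)) ^ (i' - i - 1) := by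
      rw [← pow_succ']
      congr 1
      omega
    rw [show ((u : ZMod (p ^ n)) - ((u : ZMod (p ^ n)) - (p : ZMod (p ^ n)) ^ (i' - i) * u'))
        = (p : ZMod (p ^ n)) ^ (i' - i) * u' by ring, hps, mul_assoc]
  obtain ⟨w, hw⟩ := hunit
  have hpi : (p : ZMod (p ^ n)) ^ i = 0 := by
    have := congrArg (fun x => x * ((w⁻¹ : (ZMod (p ^ n))ˣ) : ZMod (p ^ n))) key
    simp only [zero_mul] at this
    rw [← hw, mul_assoc] at this
    simpa using this
  have : ((p ^ i : ℕ) : ZMod (p ^ n)) = 0 := by push_cast; exact hpi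
  rw [ZMod.natCast_eq_zero_iff] at this
  have := (Nat.pow_dvd_pow_iff_le_right hp.one_lt).mp this
  omega


/-! ### GL₂(ZMod (p^n)) lemmas -/

lemma diag_isUnit (hn : 1 ≤ n) (g : GL (Fin 2) (ZMod (p ^ n)))
    (h : (p : ZMod (p ^ n)) ∣ (g : Matrix (Fin 2) (Fin 2) (ZMod (p ^ n))) 1 0) :
    IsUnit ((g : Matrix (Fin 2) (Fin 2) (ZMod (p ^ n))) 0 0)
      ∧ IsUnit ((g : Matrix (Fin 2) (Fin 2) (ZMod (p ^ n))) 1 1) := by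
  set a := (g : Matrix (Fin 2) (Fin 2) (ZMod (p ^ n))) 0 0
  set b := (g : Matrix (Fin 2) (Fin 2) (ZMod (p ^ n))) 0 1
  set c := (g : Matrix (Fin 2) (Fin 2) (ZMod (p ^ n))) 1 0
  set d := (g : Matrix (Fin 2) (Fin 2) (ZMod (p ^ n))) 1 1
  have hdet : IsUnit (a * d - b * c) := isUnit_det2 g
  have had : IsUnit (a * d) := by
    apply isUnit_of_p_dvd_sub hn hdet
    have : (a * d - b * c) - a * d = -(b * c) := by ring
    rw [this]
    exact dvd_neg.mpr (Dvd.dvd.mul_left h b)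
  exact ⟨isUnit_of_mul_isUnit_left had, isUnit_of_mul_isUnit_right had⟩

lemma dvd_c_mul {i : ℕ} (g h : GL (Fin 2) (ZMod (p ^ n)))
    (hg : (p : ZMod (p ^ n)) ^ i ∣ (g : Matrix (Fin 2) (Fin 2) (ZMod (p ^ n))) 1 0)
    (hh : (p : ZMod (p ^ n)) ^ i ∣ (h : Matrix (Fin 2) (Fin 2) (ZMod (p ^ n))) 1 0) :
    (p : ZMod (p ^ n)) ^ i ∣ ((g * h : GL (Fin 2) (ZMod (p ^ n))) :
      Matrix (Fin 2) (Fin 2) (ZMod (p ^ n))) 1 0 := by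
  rw [c_mul]
  exact dvd_add (hg.mul_right _) (hh.mul_left _)

lemma dvd_c_inv (hn : 1 ≤ n) {i : ℕ} (hi : 1 ≤ i) (g : GL (Fin 2) (ZMod (p ^ n)))
    (hg : (p : ZMod (p ^ n)) ^ i ∣ (g : Matrix (Fin 2) (Fin 2) (ZMod (p ^ n))) 1 0) :
    (p : ZMod (p ^ n)) ^ i ∣ ((g⁻¹ : GL (Fin 2) (ZMod (p ^ n))) :
      Matrix (Fin 2) (Fin 2) (ZMod (p ^ n))) 1 0 := by
  have hpc : (p : ZMod (p ^ n)) ∣ (g : Matrix (Fin 2) (Fin 2) (ZMod (p ^ n))) 1 0 :=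
    dvd_trans (dvd_pow_self (p : ZMod (p ^ n)) (Nat.one_le_iff_ne_zero.mp hi)) hg
  obtain ⟨ha, -⟩ := diag_isUnit hn g hpc
  have h1 : ((g⁻¹ * g : GL (Fin 2) (ZMod (p ^ n))) :
      Matrix (Fin 2) (Fin 2) (ZMod (p ^ n))) 1 0 = 0 := by
    rw [inv_mul_cancel]
    simp [Units.val_one, Matrix.one_apply]
  rw [c_mul] at h1
  have h2 : ((g⁻¹ : GL (Fin 2) (ZMod (p ^ n))) : Matrix (Fin 2) (Fin 2) (ZMod (p ^ n))) 1 0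
      * (g : Matrix (Fin 2) (Fin 2) (ZMod (p ^ n))) 0 0
      = -(((g⁻¹ : GL (Fin 2) (ZMod (p ^ n))) : Matrix (Fin 2) (Fin 2) (ZMod (p ^ n))) 1 1
        * (g : Matrix (Fin 2) (Fin 2) (ZMod (p ^ n))) 1 0) := by
    linear_combination h1
  have h3 : (p : ZMod (p ^ n)) ^ i ∣
      ((g⁻¹ : GL (Fin 2) (ZMod (p ^ n))) : Matrix (Fin 2) (Fin 2) (ZMod (p ^ n))) 1 0
        * (g : Matrix (Fin 2) (Fin 2) (ZMod (p ^ n))) 0 0 := by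
    rw [h2]
    exact dvd_neg.mpr (hg.mul_left _)
  obtain ⟨u, hu⟩ := ha
  calc (p : ZMod (p ^ n)) ^ i ∣
      (((g⁻¹ : GL (Fin 2) (ZMod (p ^ n))) : Matrix (Fin 2) (Fin 2) (ZMod (p ^ n))) 1 0
        * (g : Matrix (Fin 2) (Fin 2) (ZMod (p ^ n))) 0 0) * ((u⁻¹ : (ZMod (p ^ n))ˣ) :
          ZMod (p ^ n)) := h3.mul_right _
    _ = ((g⁻¹ : GL (Fin 2) (ZMod (p ^ n))) : Matrix (Fin 2) (Fin 2) (ZMod (p ^ n))) 1 0 := by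
        rw [← hu, mul_assoc]
        simp

/-- χ takes equal values on elements congruent mod p^r. -/
lemma chi'_congr (hn : 1 ≤ n) (hr : 1 ≤ r) {χ : (ZMod (p ^ n))ˣ →* ℂˣ}
    (hχ1 : ∀ u : (ZMod (p ^ n))ˣ, (p : ZMod (p ^ n)) ^ r ∣ ((u : ZMod (p ^ n)) - 1) → χ u = 1)
    {a b : ZMod (p ^ n)} (ha : IsUnit a)
    (hab : (p : ZMod (p ^ n)) ^ r ∣ a - b) : chi' χ a = chi' χ b := by
  have hb : IsUnit b :=
    isUnit_of_p_dvd_sub hn ha (dvd_trans (dvd_pow_self (p : ZMod (p ^ n)) (Nat.one_le_iff_ne_zero.mp hr)) hab)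
  obtain ⟨u, rfl⟩ := ha
  obtain ⟨v, rfl⟩ := hb
  rw [chi'_unit, chi'_unit]
  have key : χ (u * v⁻¹) = 1 := by
    apply hχ1
    have : ((u * v⁻¹ : (ZMod (p ^ n))ˣ) : ZMod (p ^ n)) - 1
        = ((u : ZMod (p ^ n)) - v) * ((v⁻¹ : (ZMod (p ^ n))ˣ) : ZMod (p ^ n)) := by
      rw [sub_mul, Units.val_mul]
      congr 1
      rw [← Units.val_mul, mul_inv_cancel, Units.val_one]
    rw [this]
    exact hab.mul_right _
  have : χ u = χ (u * v⁻¹ * v) := by group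
  rw [this, map_mul, key, one_mul]


/-! ### entry lemmas for yG and dG -/

section Entries
variable {R : Type*} [CommRing R]

lemma yG00 (t : R) : (yG t : Matrix (Fin 2) (Fin 2) R) 0 0 = 1 := rfl
lemma yG01 (t : R) : (yG t : Matrix (Fin 2) (Fin 2) R) 0 1 = 0 := rfl
lemma yG10 (t : R) : (yG t : Matrix (Fin 2) (Fin 2) R) 1 0 = t := rfl
lemma yG11 (t : R) : (yG t : Matrix (Fin 2) (Fin 2) R) 1 1 = 1 := rfl
lemma dG00 (v : Rˣ) : (dG v : Matrix (Fin 2) (Fin 2) R) 0 0 = (v : R) := rfl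
lemma dG01 (v : Rˣ) : (dG v : Matrix (Fin 2) (Fin 2) R) 0 1 = 0 := rfl
lemma dG10 (v : Rˣ) : (dG v : Matrix (Fin 2) (Fin 2) R) 1 0 = 0 := rfl
lemma dG11 (v : Rˣ) : (dG v : Matrix (Fin 2) (Fin 2) R) 1 1 = 1 := rfl

end Entries

/-! ### characterization of V -/

lemma V_eq_zero {χ : (ZMod (p ^ n))ˣ →* ℂˣ} {i : ℕ} {Vi : GL (Fin 2) (ZMod (p ^ n)) → ℂ}
    (hVi : isV p n χ i Vi) (x : GL (Fin 2) (ZMod (p ^ n)))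
    (hx : ¬ ∃ u : (ZMod (p ^ n))ˣ,
      (x : Matrix (Fin 2) (Fin 2) (ZMod (p ^ n))) 1 0 = (p : ZMod (p ^ n)) ^ i * u) :
    Vi x = 0 := by
  apply hVi.2.1 x
  rintro ⟨b, b', hb, hb', rfl⟩
  apply hx
  have hdb : IsUnit ((b : Matrix (Fin 2) (Fin 2) (ZMod (p ^ n))) 1 1) := by
    have h := isUnit_det2 b
    rw [hb, mul_zero, sub_zero] at h
    exact isUnit_of_mul_isUnit_right h
  have hab' : IsUnit ((b' : Matrix (Fin 2) (Fin 2) (ZMod (p ^ n))) 0 0) := by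
    have h := isUnit_det2 b'
    rw [hb', mul_zero, sub_zero] at h
    exact isUnit_of_mul_isUnit_left h
  refine ⟨(hdb.mul hab').unit, ?_⟩
  rw [IsUnit.unit_spec]
  rw [c_mul, c_mul, hb', hb, yG00, yG10, mul_zero, zero_mul, zero_add, add_zero]
  ring

lemma V_eq_chi (hn : 1 ≤ n) (hr : 1 ≤ r) {χ : (ZMod (p ^ n))ˣ →* ℂˣ}
    (hχ1 : ∀ u : (ZMod (p ^ n))ˣ, (p : ZMod (p ^ n)) ^ r ∣ ((u : ZMod (p ^ n)) - 1) → χ u = 1)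
    {i : ℕ} (hri : r ≤ i) {Vi : GL (Fin 2) (ZMod (p ^ n)) → ℂ}
    (hVi : isV p n χ i Vi) (x : GL (Fin 2) (ZMod (p ^ n)))
    (hx : ∃ u : (ZMod (p ^ n))ˣ,
      (x : Matrix (Fin 2) (Fin 2) (ZMod (p ^ n))) 1 0 = (p : ZMod (p ^ n)) ^ i * u) :
    Vi x = chi' χ ((x : Matrix (Fin 2) (Fin 2) (ZMod (p ^ n))) 1 1) := by
  obtain ⟨u, hu⟩ := hx
  set q : ZMod (p ^ n) := (p : ZMod (p ^ n)) ^ i with hq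
  have hpc : (p : ZMod (p ^ n)) ∣ (x : Matrix (Fin 2) (Fin 2) (ZMod (p ^ n))) 1 0 := by
    rw [hu]
    exact Dvd.dvd.mul_right (dvd_pow_self (p : ZMod (p ^ n)) (by omega : i ≠ 0)) _
  obtain ⟨hax, hdx⟩ := diag_isUnit hn x hpc
  set A : (ZMod (p ^ n))ˣ := hax.unit with hA
  have hAx : (A : ZMod (p ^ n)) = (x : Matrix (Fin 2) (Fin 2) (ZMod (p ^ n))) 0 0 :=
    hax.unit_spec
  set w : (ZMod (p ^ n))ˣ := A * u⁻¹ with hw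
  set z : GL (Fin 2) (ZMod (p ^ n)) := dG w⁻¹ * x with hz
  -- entries of z
  have hza : (z : Matrix (Fin 2) (Fin 2) (ZMod (p ^ n))) 0 0
      = ((w⁻¹ : (ZMod (p ^ n))ˣ) : ZMod (p ^ n))
        * (x : Matrix (Fin 2) (Fin 2) (ZMod (p ^ n))) 0 0 := by
    rw [hz, entry_mul, dG00, dG01, zero_mul, add_zero]
  have hzb : (z : Matrix (Fin 2) (Fin 2) (ZMod (p ^ n))) 0 1
      = ((w⁻¹ : (ZMod (p ^ n))ˣ) : ZMod (p ^ n))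
        * (x : Matrix (Fin 2) (Fin 2) (ZMod (p ^ n))) 0 1 := by
    rw [hz, entry_mul, dG00, dG01, zero_mul, add_zero]
  have hzc : (z : Matrix (Fin 2) (Fin 2) (ZMod (p ^ n))) 1 0
      = (x : Matrix (Fin 2) (Fin 2) (ZMod (p ^ n))) 1 0 := by
    rw [hz, entry_mul, dG10, dG11, zero_mul, zero_add, one_mul]
  have hzd : (z : Matrix (Fin 2) (Fin 2) (ZMod (p ^ n))) 1 1
      = (x : Matrix (Fin 2) (Fin 2) (ZMod (p ^ n))) 1 1 := by
    rw [hz, entry_mul, dG10, dG11, zero_mul, zero_add, one_mul]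
  have hwinv : ((w⁻¹ : (ZMod (p ^ n))ˣ) : ZMod (p ^ n))
      * (x : Matrix (Fin 2) (Fin 2) (ZMod (p ^ n))) 0 0 = (u : ZMod (p ^ n)) := by
    rw [← hAx, hw, mul_inv_rev, inv_inv, Units.val_mul, mul_assoc, ← Units.val_mul,
      inv_mul_cancel, Units.val_one, mul_one]
  set b₂ : GL (Fin 2) (ZMod (p ^ n)) := (yG q)⁻¹ * (dG w)⁻¹ * x with hb₂
  have hb₂' : b₂ = yG (-q) * z := by
    rw [hb₂, yG_inv, dG_inv, hz, mul_assoc]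
  have hb₂c : (b₂ : Matrix (Fin 2) (Fin 2) (ZMod (p ^ n))) 1 0 = 0 := by
    rw [hb₂', entry_mul, yG10, yG11, one_mul, hza, hzc]
    linear_combination (-q) * hwinv + hu
  have hb₂d : (b₂ : Matrix (Fin 2) (Fin 2) (ZMod (p ^ n))) 1 1
      = (x : Matrix (Fin 2) (Fin 2) (ZMod (p ^ n))) 1 1
        - q * (((w⁻¹ : (ZMod (p ^ n))ˣ) : ZMod (p ^ n))
          * (x : Matrix (Fin 2) (Fin 2) (ZMod (p ^ n))) 0 1) := by
    rw [hb₂', entry_mul, yG10, yG11, one_mul, hzb, hzd]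
    ring
  have hxe : x = dG w * yG q * b₂ := by
    rw [hb₂]
    group
  have hmem := hVi.1 (dG w) (yG q) b₂ (dG10 w) hb₂c
  rw [← hxe, hVi.2.2, mul_one] at hmem
  have hchi1 : chiB χ (dG w) = 1 := by
    rw [chiB_eq, dG11, ← Units.val_one (α := ZMod (p ^ n)), chi'_unit, map_one, Units.val_one]
  have hchi2 : chiB χ b₂ = chi' χ ((x : Matrix (Fin 2) (Fin 2) (ZMod (p ^ n))) 1 1) := by
    rw [chiB_eq]
    refine (chi'_congr hn hr hχ1 hdx ?_).symm
    rw [hb₂d]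
    have : (x : Matrix (Fin 2) (Fin 2) (ZMod (p ^ n))) 1 1
        - ((x : Matrix (Fin 2) (Fin 2) (ZMod (p ^ n))) 1 1
          - q * (((w⁻¹ : (ZMod (p ^ n))ˣ) : ZMod (p ^ n))
            * (x : Matrix (Fin 2) (Fin 2) (ZMod (p ^ n))) 0 1))
        = q * (((w⁻¹ : (ZMod (p ^ n))ˣ) : ZMod (p ^ n))
            * (x : Matrix (Fin 2) (Fin 2) (ZMod (p ^ n))) 0 1) := by ring
    rw [this, hq]
    exact Dvd.dvd.mul_right (pow_dvd_pow _ hri) _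
  rw [hmem, hchi1, hchi2, one_mul]

/-- sum of the V's over `Icc m n` equals the `χ`-twisted indicator of `p^m ∣ c`. -/
lemma sumV (hn : 1 ≤ n) (hr : 1 ≤ r) {χ : (ZMod (p ^ n))ˣ →* ℂˣ}
    (hχ1 : ∀ u : (ZMod (p ^ n))ˣ, (p : ZMod (p ^ n)) ^ r ∣ ((u : ZMod (p ^ n)) - 1) → χ u = 1)
    {V : ℕ → GL (Fin 2) (ZMod (p ^ n)) → ℂ}
    (hV : ∀ i, r ≤ i → i ≤ n → isV p n χ i (V i))
    {m : ℕ} (hm : r ≤ m) (hmn : m ≤ n) (x : GL (Fin 2) (ZMod (p ^ n)))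
    (hdvd : (p : ZMod (p ^ n)) ^ m ∣ (x : Matrix (Fin 2) (Fin 2) (ZMod (p ^ n))) 1 0) :
    ∑ i ∈ Finset.Icc m n, V i x = chi' χ ((x : Matrix (Fin 2) (Fin 2) (ZMod (p ^ n))) 1 1) := by
  obtain ⟨i₀, hmi₀, hi₀n, u, hu⟩ := exists_val hn hmn _ hdvd
  rw [Finset.sum_eq_single i₀]
  · exact V_eq_chi hn hr hχ1 (hm.trans hmi₀) (hV i₀ (hm.trans hmi₀) hi₀n) x ⟨u, hu⟩
  · intro i hi hne
    rw [Finset.mem_Icc] at hi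
    apply V_eq_zero (hV i (hm.trans hi.1) hi.2) x
    rintro ⟨u', hu'⟩
    exact hne (val_unique hn hi.2 hi₀n hu' hu)
  · intro h
    exact absurd (Finset.mem_Icc.mpr ⟨hmi₀, hi₀n⟩) h

lemma sumV_zero {χ : (ZMod (p ^ n))ˣ →* ℂˣ}
    {V : ℕ → GL (Fin 2) (ZMod (p ^ n)) → ℂ}
    (hV : ∀ i, r ≤ i → i ≤ n → isV p n χ i (V i))
    {m : ℕ} (hm : r ≤ m) (x : GL (Fin 2) (ZMod (p ^ n)))
    (hdvd : ¬ (p : ZMod (p ^ n)) ^ m ∣ (x : Matrix (Fin 2) (Fin 2) (ZMod (p ^ n))) 1 0) :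
    ∑ i ∈ Finset.Icc m n, V i x = 0 := by
  apply Finset.sum_eq_zero
  intro i hi
  rw [Finset.mem_Icc] at hi
  apply V_eq_zero (hV i (hm.trans hi.1) hi.2) x
  rintro ⟨u', hu'⟩
  apply hdvd
  rw [hu']
  exact Dvd.dvd.mul_right (pow_dvd_pow _ hi.1) _


/-! ### counting -/

lemma card_multiples (hn : 1 ≤ n) {j : ℕ} (hjn : j ≤ n) :
    Nat.card {t : ZMod (p ^ n) // (p : ZMod (p ^ n)) ^ j ∣ t} = p ^ (n - j) := by
  haveI : NeZero (p ^ n) := ⟨pow_ne_zero _ (Fact.out (p := p.Prime)).ne_zero⟩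
  have hp : p.Prime := Fact.out
  have hpj : 0 < p ^ j := pow_pos hp.pos _
  have hsplit : p ^ (n - j) * p ^ j = p ^ n := by
    rw [← pow_add]
    congr 1
    omega
  refine Nat.card_eq_of_equiv_fin ⟨?_, ?_, ?_, ?_⟩
  · refine fun t => ⟨t.1.val / p ^ j, ?_⟩
    have hd : p ^ j ∣ t.1.val := (pi_pow_dvd_iff hn hjn _).mp t.2
    rw [Nat.div_lt_iff_lt_mul hpj, hsplit]
    exact ZMod.val_lt t.1
  · refine fun k => ⟨((p ^ j * (k : ℕ) : ℕ) : ZMod (p ^ n)), ?_⟩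
    push_cast
    exact ⟨(k : ℕ), rfl⟩
  · intro t
    apply Subtype.ext
    have hd : p ^ j ∣ t.1.val := (pi_pow_dvd_iff hn hjn _).mp t.2
    show (((p ^ j * (t.1.val / p ^ j) : ℕ)) : ZMod (p ^ n)) = t.1
    rw [Nat.mul_div_cancel' hd, ZMod.natCast_val, ZMod.cast_id]
  · intro k
    apply Fin.ext
    show (((p ^ j * (k : ℕ) : ℕ)) : ZMod (p ^ n)).val / p ^ j = (k : ℕ)
    have hlt : p ^ j * (k : ℕ) < p ^ n := by
      calc p ^ j * (k : ℕ) < p ^ j * p ^ (n - j) := by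
            exact mul_lt_mul_of_pos_left k.2 hpj
        _ = p ^ n := by rw [mul_comm]; exact hsplit
    rw [ZMod.val_natCast, Nat.mod_eq_of_lt hlt, Nat.mul_div_cancel_left _ hpj]

lemma card_Sj (hn : 1 ≤ n) {j : ℕ} (hj1 : 1 ≤ j) (hjn : j ≤ n) :
    Nat.card {g : GL (Fin 2) (ZMod (p ^ n)) //
        (p : ZMod (p ^ n)) ^ j ∣ (g : Matrix (Fin 2) (Fin 2) (ZMod (p ^ n))) 1 0}
      = p ^ (n - j) * cardB (ZMod (p ^ n)) := by
  have hE : ({t : ZMod (p ^ n) // (p : ZMod (p ^ n)) ^ j ∣ t}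
      × {b : GL (Fin 2) (ZMod (p ^ n)) // inB b})
      ≃ {g : GL (Fin 2) (ZMod (p ^ n)) //
        (p : ZMod (p ^ n)) ^ j ∣ (g : Matrix (Fin 2) (Fin 2) (ZMod (p ^ n))) 1 0} := by
    refine ⟨?_, ?_, ?_, ?_⟩
    · refine fun q => ⟨yG q.1.1 * q.2.1, ?_⟩
      rw [c_mul, yG10, yG11, q.2.2, mul_zero, add_zero]
      exact q.1.2.mul_right _
    · intro g
      have hpc : (p : ZMod (p ^ n)) ∣ (g.1 : Matrix (Fin 2) (Fin 2) (ZMod (p ^ n))) 1 0 :=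
        dvd_trans (dvd_pow_self (p : ZMod (p ^ n)) (Nat.one_le_iff_ne_zero.mp hj1)) g.2
      have ha := (diag_isUnit hn g.1 hpc).1
      refine ⟨⟨(g.1 : Matrix (Fin 2) (Fin 2) (ZMod (p ^ n))) 1 0
        * ((ha.unit⁻¹ : (ZMod (p ^ n))ˣ) : ZMod (p ^ n)), g.2.mul_right _⟩,
        ⟨(yG ((g.1 : Matrix (Fin 2) (Fin 2) (ZMod (p ^ n))) 1 0
          * ((ha.unit⁻¹ : (ZMod (p ^ n))ˣ) : ZMod (p ^ n))))⁻¹ * g.1, ?_⟩⟩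
      show ((_ : GL (Fin 2) (ZMod (p ^ n))) : Matrix (Fin 2) (Fin 2) (ZMod (p ^ n))) 1 0 = 0
      rw [yG_inv, c_mul, yG10, yG11, one_mul]
      have hva : ((ha.unit⁻¹ : (ZMod (p ^ n))ˣ) : ZMod (p ^ n))
          * (g.1 : Matrix (Fin 2) (Fin 2) (ZMod (p ^ n))) 0 0 = 1 := ha.val_inv_mul
      linear_combination (-((g.1 : Matrix (Fin 2) (Fin 2) (ZMod (p ^ n))) 1 0)) * hva
    · rintro ⟨⟨t, ht⟩, ⟨b, hb⟩⟩
      have h00 : ((yG t * b : GL (Fin 2) (ZMod (p ^ n)))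
          : Matrix (Fin 2) (Fin 2) (ZMod (p ^ n))) 0 0
          = (b : Matrix (Fin 2) (Fin 2) (ZMod (p ^ n))) 0 0 := by
        rw [entry_mul, yG00, yG01, one_mul, zero_mul, add_zero]
      have h10 : ((yG t * b : GL (Fin 2) (ZMod (p ^ n)))
          : Matrix (Fin 2) (Fin 2) (ZMod (p ^ n))) 1 0
          = t * (b : Matrix (Fin 2) (Fin 2) (ZMod (p ^ n))) 0 0 := by
        rw [c_mul, yG10, yG11, hb, mul_zero, add_zero]
      have hpc : (p : ZMod (p ^ n)) ∣ ((yG t * b : GL (Fin 2) (ZMod (p ^ n)))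
          : Matrix (Fin 2) (Fin 2) (ZMod (p ^ n))) 1 0 := by
        rw [h10]
        exact (dvd_trans (dvd_pow_self (p : ZMod (p ^ n)) (Nat.one_le_iff_ne_zero.mp hj1)) ht).mul_right _
      have ha := (diag_isUnit hn (yG t * b) hpc).1
      have htt : ((yG t * b : GL (Fin 2) (ZMod (p ^ n)))
          : Matrix (Fin 2) (Fin 2) (ZMod (p ^ n))) 1 0
          * ((ha.unit⁻¹ : (ZMod (p ^ n))ˣ) : ZMod (p ^ n)) = t := by
        have hva : ((yG t * b : GL (Fin 2) (ZMod (p ^ n)))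
            : Matrix (Fin 2) (Fin 2) (ZMod (p ^ n))) 0 0
            * ((ha.unit⁻¹ : (ZMod (p ^ n))ˣ) : ZMod (p ^ n)) = 1 := ha.mul_val_inv
        rw [h10, ← h00, mul_assoc, hva, mul_one]
      refine Prod.ext (Subtype.ext ?_) (Subtype.ext ?_)
      · exact htt
      · show (yG _)⁻¹ * (yG t * b) = b
        rw [htt, inv_mul_cancel_left]
    · rintro ⟨g, hg⟩
      apply Subtype.ext
      show yG _ * ((yG _)⁻¹ * g) = g
      rw [mul_inv_cancel_left]
  calc Nat.card {g : GL (Fin 2) (ZMod (p ^ n)) //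
        (p : ZMod (p ^ n)) ^ j ∣ (g : Matrix (Fin 2) (Fin 2) (ZMod (p ^ n))) 1 0}
      = Nat.card ({t : ZMod (p ^ n) // (p : ZMod (p ^ n)) ^ j ∣ t}
          × {b : GL (Fin 2) (ZMod (p ^ n)) // inB b}) := (Nat.card_congr hE).symm
    _ = p ^ (n - j) * cardB (ZMod (p ^ n)) := by
        rw [Nat.card_prod, card_multiples hn hjn]
        rfl


/-! ### the function W and the convolution computation -/

def Wfun (χ : (ZMod (p ^ n))ˣ →* ℂˣ) (m : ℕ) (x : GL (Fin 2) (ZMod (p ^ n))) : ℂ :=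
  letI := Classical.dec ((p : ZMod (p ^ n)) ^ m ∣ (x : Matrix (Fin 2) (Fin 2) (ZMod (p ^ n))) 1 0)
  if (p : ZMod (p ^ n)) ^ m ∣ (x : Matrix (Fin 2) (Fin 2) (ZMod (p ^ n))) 1 0
  then chi' χ ((x : Matrix (Fin 2) (Fin 2) (ZMod (p ^ n))) 1 1) else 0

lemma Wfun_of_dvd (χ : (ZMod (p ^ n))ˣ →* ℂˣ) (m : ℕ) {x : GL (Fin 2) (ZMod (p ^ n))}
    (h : (p : ZMod (p ^ n)) ^ m ∣ (x : Matrix (Fin 2) (Fin 2) (ZMod (p ^ n))) 1 0) :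
    Wfun χ m x = chi' χ ((x : Matrix (Fin 2) (Fin 2) (ZMod (p ^ n))) 1 1) := by
  simp only [Wfun]
  rw [if_pos h]

lemma Wfun_of_not_dvd (χ : (ZMod (p ^ n))ˣ →* ℂˣ) (m : ℕ) {x : GL (Fin 2) (ZMod (p ^ n))}
    (h : ¬ (p : ZMod (p ^ n)) ^ m ∣ (x : Matrix (Fin 2) (Fin 2) (ZMod (p ^ n))) 1 0) :
    Wfun χ m x = 0 := by
  simp only [Wfun]
  rw [if_neg h]

section Conv

variable [Fintype (ZMod (p ^ n))] [DecidableEq (ZMod (p ^ n))]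
variable {χ : (ZMod (p ^ n))ˣ →* ℂˣ}

/-- The common core: a sum over `S_j` of equal terms. -/
lemma sum_core (hn : 1 ≤ n) (hr : 1 ≤ r)
    (hχ1 : ∀ u : (ZMod (p ^ n))ˣ, (p : ZMod (p ^ n)) ^ r ∣ ((u : ZMod (p ^ n)) - 1) → χ u = 1)
    {j : ℕ} (hrj : r ≤ j) (hjn : j ≤ n) (F : GL (Fin 2) (ZMod (p ^ n)) → ℂ)
    (hF : ∀ y : GL (Fin 2) (ZMod (p ^ n)),
        ¬ (p : ZMod (p ^ n)) ^ j ∣ (y : Matrix (Fin 2) (Fin 2) (ZMod (p ^ n))) 1 0 → F y = 0)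
    (c : ℂ)
    (hc : ∀ y : GL (Fin 2) (ZMod (p ^ n)),
        (p : ZMod (p ^ n)) ^ j ∣ (y : Matrix (Fin 2) (Fin 2) (ZMod (p ^ n))) 1 0 → F y = c) :
    ∑ y : GL (Fin 2) (ZMod (p ^ n)), F y = ((p ^ (n - j) * cardB (ZMod (p ^ n)) : ℕ) : ℂ) * c := by
  classical
  have h1 : ∑ y : GL (Fin 2) (ZMod (p ^ n)), F y
      = ∑ y : GL (Fin 2) (ZMod (p ^ n)),
          if (p : ZMod (p ^ n)) ^ j ∣ (y : Matrix (Fin 2) (Fin 2) (ZMod (p ^ n))) 1 0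
          then c else 0 := by
    apply Finset.sum_congr rfl
    intro y _
    by_cases hy : (p : ZMod (p ^ n)) ^ j ∣ (y : Matrix (Fin 2) (Fin 2) (ZMod (p ^ n))) 1 0
    · rw [if_pos hy, hc y hy]
    · rw [if_neg hy, hF y hy]
  rw [h1, ← Finset.sum_filter, Finset.sum_const, nsmul_eq_mul]
  congr 1
  rw [← Fintype.card_subtype, ← Nat.card_eq_fintype_card,
    card_Sj hn (hr.trans hrj) hjn]

lemma convA (hn : 1 ≤ n) (hr : 1 ≤ r)
    (hχ1 : ∀ u : (ZMod (p ^ n))ˣ, (p : ZMod (p ^ n)) ^ r ∣ ((u : ZMod (p ^ n)) - 1) → χ u = 1)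
    {m j : ℕ} (hm : r ≤ m) (hmj : m ≤ j) (hjn : j ≤ n) (x : GL (Fin 2) (ZMod (p ^ n))) :
    ∑ y : GL (Fin 2) (ZMod (p ^ n)), Wfun χ j y * Wfun χ m (y⁻¹ * x)
      = ((p ^ (n - j) * cardB (ZMod (p ^ n)) : ℕ) : ℂ) * Wfun χ m x := by
  classical
  have hm1 : 1 ≤ m := hr.trans hm
  apply sum_core hn hr hχ1 (hm.trans hmj) hjn
  · intro y hy
    rw [Wfun_of_not_dvd _ _ hy, zero_mul]
  · intro y hy
    have hym : (p : ZMod (p ^ n)) ^ m ∣ (y : Matrix (Fin 2) (Fin 2) (ZMod (p ^ n))) 1 0 :=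
      dvd_trans (pow_dvd_pow _ hmj) hy
    have hyi := dvd_c_inv hn hm1 y hym
    by_cases hx : (p : ZMod (p ^ n)) ^ m ∣ (x : Matrix (Fin 2) (Fin 2) (ZMod (p ^ n))) 1 0
    · have hz := dvd_c_mul y⁻¹ x hyi hx
      rw [Wfun_of_dvd _ _ hy, Wfun_of_dvd _ _ hz, Wfun_of_dvd _ _ hx]
      have hdy : IsUnit ((y : Matrix (Fin 2) (Fin 2) (ZMod (p ^ n))) 1 1) :=
        (diag_isUnit hn y (dvd_trans (dvd_pow_self (p : ZMod (p ^ n))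
          (Nat.one_le_iff_ne_zero.mp (hr.trans (hm.trans hmj)))) hy)).2
      have hdz : IsUnit (((y⁻¹ * x : GL (Fin 2) (ZMod (p ^ n)))
          : Matrix (Fin 2) (Fin 2) (ZMod (p ^ n))) 1 1) :=
        (diag_isUnit hn _ (dvd_trans (dvd_pow_self (p : ZMod (p ^ n))
          (Nat.one_le_iff_ne_zero.mp hm1)) hz)).2
      rw [← chi'_mul χ hdy hdz]
      apply chi'_congr hn hr hχ1 (hdy.mul hdz)
      have hd := d_mul y (y⁻¹ * x)
      rw [mul_inv_cancel_left] at hd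
      have heq : (y : Matrix (Fin 2) (Fin 2) (ZMod (p ^ n))) 1 1
            * ((y⁻¹ * x : GL (Fin 2) (ZMod (p ^ n))) : Matrix (Fin 2) (Fin 2) (ZMod (p ^ n))) 1 1
          - (x : Matrix (Fin 2) (Fin 2) (ZMod (p ^ n))) 1 1
          = -((y : Matrix (Fin 2) (Fin 2) (ZMod (p ^ n))) 1 0
            * ((y⁻¹ * x : GL (Fin 2) (ZMod (p ^ n)))
              : Matrix (Fin 2) (Fin 2) (ZMod (p ^ n))) 0 1) := by
        linear_combination -hd
      rw [heq]
      exact dvd_neg.mpr (dvd_trans (pow_dvd_pow _ (hm.trans hmj)) (hy.mul_right _))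
    · rw [Wfun_of_not_dvd _ _ hx]
      have hz : ¬ (p : ZMod (p ^ n)) ^ m ∣ (((y⁻¹ * x : GL (Fin 2) (ZMod (p ^ n)))
          : Matrix (Fin 2) (Fin 2) (ZMod (p ^ n))) 1 0) := by
        intro hz
        apply hx
        have := dvd_c_mul y (y⁻¹ * x) hym hz
        rw [mul_inv_cancel_left] at this
        exact this
      rw [Wfun_of_not_dvd _ _ hz, mul_zero]

lemma convB (hn : 1 ≤ n) (hr : 1 ≤ r)
    (hχ1 : ∀ u : (ZMod (p ^ n))ˣ, (p : ZMod (p ^ n)) ^ r ∣ ((u : ZMod (p ^ n)) - 1) → χ u = 1)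
    {m j : ℕ} (hm : r ≤ m) (hmj : m ≤ j) (hjn : j ≤ n) (x : GL (Fin 2) (ZMod (p ^ n))) :
    ∑ y : GL (Fin 2) (ZMod (p ^ n)), Wfun χ m y * Wfun χ j (y⁻¹ * x)
      = ((p ^ (n - j) * cardB (ZMod (p ^ n)) : ℕ) : ℂ) * Wfun χ m x := by
  classical
  have hm1 : 1 ≤ m := hr.trans hm
  have hj1 : 1 ≤ j := hm1.trans hmj
  have hre : ∑ z : GL (Fin 2) (ZMod (p ^ n)), Wfun χ m (x * z⁻¹) * Wfun χ j z
      = ∑ y : GL (Fin 2) (ZMod (p ^ n)), Wfun χ m y * Wfun χ j (y⁻¹ * x) := by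
    apply Fintype.sum_equiv ((Equiv.inv (GL (Fin 2) (ZMod (p ^ n)))).trans (Equiv.mulLeft x))
    intro z
    have h2 : ((Equiv.inv (GL (Fin 2) (ZMod (p ^ n)))).trans (Equiv.mulLeft x)) z = x * z⁻¹ :=
      rfl
    rw [h2]
    have h1 : (x * z⁻¹)⁻¹ * x = z := by group
    rw [h1]
  rw [← hre]
  apply sum_core hn hr hχ1 (hm.trans hmj) hjn
  · intro z hz
    rw [Wfun_of_not_dvd _ _ hz, mul_zero]
  · intro z hz
    have hzm : (p : ZMod (p ^ n)) ^ m ∣ (z : Matrix (Fin 2) (Fin 2) (ZMod (p ^ n))) 1 0 :=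
      dvd_trans (pow_dvd_pow _ hmj) hz
    have hzi := dvd_c_inv hn hm1 z hzm
    by_cases hx : (p : ZMod (p ^ n)) ^ m ∣ (x : Matrix (Fin 2) (Fin 2) (ZMod (p ^ n))) 1 0
    · have hxz := dvd_c_mul x z⁻¹ hx hzi
      rw [Wfun_of_dvd _ _ hz, Wfun_of_dvd _ _ hxz, Wfun_of_dvd _ _ hx]
      have hdz : IsUnit ((z : Matrix (Fin 2) (Fin 2) (ZMod (p ^ n))) 1 1) :=
        (diag_isUnit hn z (dvd_trans (dvd_pow_self (p : ZMod (p ^ n))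
          (Nat.one_le_iff_ne_zero.mp hj1)) hz)).2
      have hdxz : IsUnit (((x * z⁻¹ : GL (Fin 2) (ZMod (p ^ n)))
          : Matrix (Fin 2) (Fin 2) (ZMod (p ^ n))) 1 1) :=
        (diag_isUnit hn _ (dvd_trans (dvd_pow_self (p : ZMod (p ^ n))
          (Nat.one_le_iff_ne_zero.mp hm1)) hxz)).2
      rw [← chi'_mul χ hdxz hdz]
      apply chi'_congr hn hr hχ1 (hdxz.mul hdz)
      have hd := d_mul (x * z⁻¹) z
      rw [inv_mul_cancel_right] at hd
      have heq : ((x * z⁻¹ : GL (Fin 2) (ZMod (p ^ n)))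
            : Matrix (Fin 2) (Fin 2) (ZMod (p ^ n))) 1 1
            * (z : Matrix (Fin 2) (Fin 2) (ZMod (p ^ n))) 1 1
          - (x : Matrix (Fin 2) (Fin 2) (ZMod (p ^ n))) 1 1
          = -(((x * z⁻¹ : GL (Fin 2) (ZMod (p ^ n)))
            : Matrix (Fin 2) (Fin 2) (ZMod (p ^ n))) 1 0
            * (z : Matrix (Fin 2) (Fin 2) (ZMod (p ^ n))) 0 1) := by
        linear_combination -hd
      rw [heq]
      exact dvd_neg.mpr (dvd_trans (pow_dvd_pow _ hm) (hxz.mul_right _))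
    · rw [Wfun_of_not_dvd _ _ hx]
      have hxz : ¬ (p : ZMod (p ^ n)) ^ m ∣ (((x * z⁻¹ : GL (Fin 2) (ZMod (p ^ n)))
          : Matrix (Fin 2) (Fin 2) (ZMod (p ^ n))) 1 0) := by
        intro hxz
        apply hx
        have := dvd_c_mul (x * z⁻¹) z hxz hzm
        rw [inv_mul_cancel_right] at this
        exact this
      rw [Wfun_of_not_dvd _ _ hxz, zero_mul]

end Conv

end Stmt8Aux

/-- For `r ≤ ℓ ≤ j ≤ n`: `Y_j * Y_ℓ = Y_ℓ * Y_j = p^{n−j} Y_ℓ` in `H(χ)`, where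
`Y_ℓ = Σ_{i=ℓ}^n V_i`. -/
theorem stmt8 (p n r : ℕ) [Fact p.Prime] (hn : 1 ≤ n) (hr : 1 ≤ r) (hrn : r ≤ n)
    (χ : (ZMod (p ^ n))ˣ →* ℂˣ) (hχ : hasConductor p n r χ)
    (V : ℕ → GL (Fin 2) (ZMod (p ^ n)) → ℂ)
    (hV : ∀ j, r ≤ j → j ≤ n → isV p n χ j (V j))
    (ℓ j : ℕ) (hℓ : r ≤ ℓ) (hℓj : ℓ ≤ j) (hj : j ≤ n) :
    conv (fun t => ∑ i ∈ Finset.Icc j n, V i t) (fun t => ∑ i ∈ Finset.Icc ℓ n, V i t) =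
      conv (fun t => ∑ i ∈ Finset.Icc ℓ n, V i t) (fun t => ∑ i ∈ Finset.Icc j n, V i t) ∧
    ∀ x, conv (fun t => ∑ i ∈ Finset.Icc j n, V i t) (fun t => ∑ i ∈ Finset.Icc ℓ n, V i t) x =
      (p : ℂ) ^ (n - j) * ∑ i ∈ Finset.Icc ℓ n, V i x := by
  classical
  obtain ⟨hχ1, -⟩ := hχ
  have hrj : r ≤ j := hℓ.trans hℓj
  have hℓn : ℓ ≤ n := hℓj.trans hj
  have hYℓ : (fun t => ∑ i ∈ Finset.Icc ℓ n, V i t) = Stmt8Aux.Wfun χ ℓ := by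
    funext t
    by_cases ht : (p : ZMod (p ^ n)) ^ ℓ ∣ (t : Matrix (Fin 2) (Fin 2) (ZMod (p ^ n))) 1 0
    · rw [Stmt8Aux.Wfun_of_dvd _ _ ht]
      exact Stmt8Aux.sumV hn hr hχ1 hV hℓ hℓn t ht
    · rw [Stmt8Aux.Wfun_of_not_dvd _ _ ht]
      exact Stmt8Aux.sumV_zero hV hℓ t ht
  have hYj : (fun t => ∑ i ∈ Finset.Icc j n, V i t) = Stmt8Aux.Wfun χ j := by
    funext t
    by_cases ht : (p : ZMod (p ^ n)) ^ j ∣ (t : Matrix (Fin 2) (Fin 2) (ZMod (p ^ n))) 1 0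
    · rw [Stmt8Aux.Wfun_of_dvd _ _ ht]
      exact Stmt8Aux.sumV hn hr hχ1 hV hrj hj t ht
    · rw [Stmt8Aux.Wfun_of_not_dvd _ _ ht]
      exact Stmt8Aux.sumV_zero hV hrj t ht
  have hB : (cardB (ZMod (p ^ n)) : ℂ) ≠ 0 := by
    have hpos : 0 < cardB (ZMod (p ^ n)) := by
      have hne : Nonempty {g : GL (Fin 2) (ZMod (p ^ n)) // inB g} := by
        refine ⟨⟨1, ?_⟩⟩
        show ((1 : GL (Fin 2) (ZMod (p ^ n))) : Matrix (Fin 2) (Fin 2) (ZMod (p ^ n))) 1 0 = 0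
        rw [Units.val_one]
        exact Matrix.one_apply_ne (by decide)
      exact Nat.card_pos
    exact_mod_cast hpos.ne'
  rw [hYj, hYℓ]
  constructor
  · funext x
    simp only [conv]
    rw [Stmt8Aux.convA hn hr hχ1 hℓ hℓj hj x, Stmt8Aux.convB hn hr hχ1 hℓ hℓj hj x]
  · intro x
    have h2 : (∑ i ∈ Finset.Icc ℓ n, V i x) = Stmt8Aux.Wfun χ ℓ x := congrFun hYℓ x
    rw [h2]
    simp only [conv]
    rw [Stmt8Aux.convA hn hr hχ1 hℓ hℓj hj x, Nat.cast_mul, Nat.cast_pow]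
    field_simp

end
end

section
/- For each j with r ≤ j ≤ n−1, the ℂ-linear endomorphism π_L(V_j) of I(n) given by φ ↦ V_j * φ has trace 0. -/
noncomputable section

/-- `I(n) = {φ : G → ℂ : φ(bx) = χ_B(b)φ(x) for all b ∈ B, x ∈ G}` as a `ℂ`-subspace of
the functions `G → ℂ`. -/
def Isub (p n : ℕ) (χ : (ZMod (p ^ n))ˣ →* ℂˣ) :
    Submodule ℂ (GL (Fin 2) (ZMod (p ^ n)) → ℂ) where
  carrier := {φ | ∀ b x : GL (Fin 2) (ZMod (p ^ n)), inB b → φ (b * x) = chiB χ b * φ x}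
  add_mem' := by
    intro f g hf hg b x hb
    simp only [Pi.add_apply, hf b x hb, hg b x hb]; ring
  zero_mem' := by intro b x hb; simp
  smul_mem' := by
    intro c f hf b x hb
    simp only [Pi.smul_apply, hf b x hb, smul_eq_mul]; ring

section Aux
variable {R : Type*} [CommRing R]

lemma isUnit_det' (g : GL (Fin 2) R) : IsUnit ((g : Matrix (Fin 2) (Fin 2) R).det) :=
  g.isUnit.map Matrix.detMonoidHom

lemma isUnit_d {b : GL (Fin 2) R} (h : inB b) :
    IsUnit ((b : Matrix (Fin 2) (Fin 2) R) 1 1) := by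
  have hd := isUnit_det' b
  rw [Matrix.det_fin_two, h, mul_zero, sub_zero] at hd
  exact isUnit_of_mul_isUnit_right hd

lemma isUnit_a {b : GL (Fin 2) R} (h : inB b) :
    IsUnit ((b : Matrix (Fin 2) (Fin 2) R) 0 0) := by
  have hd := isUnit_det' b
  rw [Matrix.det_fin_two, h, mul_zero, sub_zero] at hd
  exact isUnit_of_mul_isUnit_left hd

lemma inB_mul {b b' : GL (Fin 2) R} (h : inB b) (h' : inB b') : inB (b * b') := by
  unfold inB at *
  rw [Units.val_mul, Matrix.mul_apply, Fin.sum_univ_two, h, h', zero_mul, mul_zero, add_zero]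

lemma inB_inv {b : GL (Fin 2) R} (h : inB b) : inB b⁻¹ := by
  have h1 : ((b⁻¹ * b : GL (Fin 2) R) : Matrix (Fin 2) (Fin 2) R) 1 0 = 0 := by
    rw [inv_mul_cancel]
    simp [Matrix.one_apply]
  rw [Units.val_mul, Matrix.mul_apply, Fin.sum_univ_two, h, mul_zero, add_zero] at h1
  rcases isUnit_a h with ⟨u, hu⟩
  rw [← hu, Units.mul_left_eq_zero] at h1
  exact h1

lemma d_mul (b b' : GL (Fin 2) R) (h : inB b) :
    ((b * b' : GL (Fin 2) R) : Matrix (Fin 2) (Fin 2) R) 1 1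
      = (b : Matrix (Fin 2) (Fin 2) R) 1 1 * (b' : Matrix (Fin 2) (Fin 2) R) 1 1 := by
  rw [Units.val_mul, Matrix.mul_apply, Fin.sum_univ_two, h, zero_mul, zero_add]

lemma chiB_isUnit {χ : Rˣ →* ℂˣ} {b : GL (Fin 2) R}
    (h : IsUnit ((b : Matrix (Fin 2) (Fin 2) R) 1 1)) :
    chiB χ b = (χ h.unit : ℂ) := by
  unfold chiB
  rw [dif_pos h]

lemma chiB_mul (χ : Rˣ →* ℂˣ) {b b' : GL (Fin 2) R} (h : inB b) (h' : inB b') :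
    chiB χ (b * b') = chiB χ b * chiB χ b' := by
  have hd := isUnit_d h
  have hd' := isUnit_d h'
  have hdd : IsUnit (((b * b' : GL (Fin 2) R) : Matrix (Fin 2) (Fin 2) R) 1 1) := by
    rw [d_mul b b' h]; exact hd.mul hd'
  rw [chiB_isUnit hdd, chiB_isUnit hd, chiB_isUnit hd']
  have : hdd.unit = hd.unit * hd'.unit := by
    ext; simp [d_mul b b' h]
  rw [this, map_mul, Units.val_mul]

lemma chiB_one (χ : Rˣ →* ℂˣ) : chiB χ (1 : GL (Fin 2) R) = 1 := by
  have h1 : IsUnit (((1 : GL (Fin 2) R) : Matrix (Fin 2) (Fin 2) R) 1 1) := by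
    simp [Matrix.one_apply]
  rw [chiB_isUnit h1]
  have : h1.unit = 1 := by ext; simp [Matrix.one_apply]
  rw [this, map_one, Units.val_one]

lemma chiB_ne_zero {χ : Rˣ →* ℂˣ} {b : GL (Fin 2) R} (h : inB b) : chiB χ b ≠ 0 := by
  rw [chiB_isUnit (isUnit_d h)]
  exact Units.ne_zero _

lemma chiB_inv (χ : Rˣ →* ℂˣ) {b : GL (Fin 2) R} (h : inB b) :
    chiB χ b⁻¹ = (chiB χ b)⁻¹ := by
  have : chiB χ b * chiB χ b⁻¹ = 1 := by
    rw [← chiB_mul χ h (inB_inv h), mul_inv_cancel, chiB_one]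
  exact eq_inv_of_mul_eq_one_right this

end Aux

section Vvanish
variable {p n : ℕ} [Fact p.Prime]

lemma pj_ne_zero {j : ℕ} (hn : 1 ≤ n) (hjn : j ≤ n - 1) :
    ((p : ZMod (p ^ n)) ^ j) ≠ 0 := by
  haveI : NeZero (p ^ n) := ⟨pow_ne_zero _ (Fact.out (p := p.Prime)).ne_zero⟩
  intro h
  rw [← Nat.cast_pow, ZMod.natCast_eq_zero_iff] at h
  have hle := (Nat.pow_dvd_pow_iff_le_right (Fact.out (p := p.Prime)).one_lt).mp h
  omega

lemma V_inB_eq_zero {j : ℕ} (hn : 1 ≤ n) (hjn : j ≤ n - 1)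
    {χ : (ZMod (p ^ n))ˣ →* ℂˣ} {V : GL (Fin 2) (ZMod (p ^ n)) → ℂ}
    (hV : isV p n χ j V) {b : GL (Fin 2) (ZMod (p ^ n))} (hb : inB b) : V b = 0 := by
  apply hV.2.1
  rintro ⟨b₁, b₂, h₁, h₂, heq⟩
  set t : ZMod (p ^ n) := (p : ZMod (p ^ n)) ^ j with ht
  have e₁ : (b₁ : Matrix (Fin 2) (Fin 2) (ZMod (p ^ n))) 1 0 = 0 := h₁
  have e₂ : (b₂ : Matrix (Fin 2) (Fin 2) (ZMod (p ^ n))) 1 0 = 0 := h₂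
  have hyG : ((yG t : GL (Fin 2) (ZMod (p ^ n))) : Matrix (Fin 2) (Fin 2) (ZMod (p ^ n)))
      = !![1, 0; t, 1] := rfl
  have hentry : (b₁ : Matrix (Fin 2) (Fin 2) (ZMod (p ^ n))) 1 1 * t
        * (b₂ : Matrix (Fin 2) (Fin 2) (ZMod (p ^ n))) 0 0 = 0 := by
    have h0 : ((b₁ * yG t * b₂ : GL (Fin 2) (ZMod (p ^ n)))
        : Matrix (Fin 2) (Fin 2) (ZMod (p ^ n))) 1 0 = 0 := by rw [← heq]; exact hb
    rw [Units.val_mul, Units.val_mul, hyG, Matrix.mul_apply, Fin.sum_univ_two] at h0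
    rw [Matrix.mul_apply, Fin.sum_univ_two, Matrix.mul_apply, Fin.sum_univ_two] at h0
    rw [e₁, e₂] at h0
    rw [← h0]
    simp
  rw [(isUnit_a h₂).mul_left_eq_zero, (isUnit_d h₁).mul_right_eq_zero] at hentry
  exact pj_ne_zero hn hjn hentry
end Vvanish

section Main

instance {R : Type*} [CommRing R] [DecidableEq R] : DecidablePred (inB (R := R)) :=
  fun g => by unfold inB; infer_instance

variable (p n : ℕ) [Fact p.Prime] (χ : (ZMod (p ^ n))ˣ →* ℂˣ)

local notation "R'" => ZMod (p ^ n)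
local notation "Gp" => GL (Fin 2) (ZMod (p ^ n))

lemma cardB_eq : (cardB R' : ℂ) = (Fintype.card {g : Gp // inB g} : ℂ) := by
  rw [cardB, Nat.card_eq_fintype_card]

lemma cardB_ne_zero : (cardB R' : ℂ) ≠ 0 := by
  rw [cardB_eq]
  simp only [ne_eq, Nat.cast_eq_zero, Fintype.card_eq_zero_iff]
  rw [not_isEmpty_iff]
  exact ⟨⟨1, by unfold inB; simp [Matrix.one_apply]⟩⟩

/-- Right translation by `b₀⁻¹` as an equivalence of `B`. -/
def shiftEquiv {R : Type*} [CommRing R] [DecidableEq R] {b₀ : GL (Fin 2) R} (h₀ : inB b₀) :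
    {g : GL (Fin 2) R // inB g} ≃ {g : GL (Fin 2) R // inB g} where
  toFun b := ⟨b.1 * b₀⁻¹, inB_mul b.2 (inB_inv h₀)⟩
  invFun b := ⟨b.1 * b₀, inB_mul b.2 h₀⟩
  left_inv b := by ext : 1; simp [mul_assoc]
  right_inv b := by ext : 1; simp [mul_assoc]

/-- The averaging projection onto `Isub`. -/
def Pmap : (Gp → ℂ) →ₗ[ℂ] Isub p n χ where
  toFun φ := ⟨fun x => (cardB R' : ℂ)⁻¹ *
      ∑ b : {g : Gp // inB g}, (chiB χ b.1)⁻¹ * φ (b.1 * x), by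
    intro b₀ x h₀
    have key : ∀ b : {g : Gp // inB g},
        (chiB χ ((shiftEquiv h₀ b).1))⁻¹ * φ ((shiftEquiv h₀ b).1 * (b₀ * x))
          = chiB χ b₀ * ((chiB χ b.1)⁻¹ * φ (b.1 * x)) := by
      intro b
      have h1 : chiB χ (b.1 * b₀⁻¹) = chiB χ b.1 * (chiB χ b₀)⁻¹ := by
        rw [chiB_mul χ b.2 (inB_inv h₀), chiB_inv χ h₀]
      have h2 : b.1 * b₀⁻¹ * (b₀ * x) = b.1 * x := by
        rw [mul_assoc, inv_mul_cancel_left]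
      show (chiB χ (b.1 * b₀⁻¹))⁻¹ * φ (b.1 * b₀⁻¹ * (b₀ * x)) = _
      rw [h1, h2, mul_inv, inv_inv]
      ring
    have hsum : (∑ b : {g : Gp // inB g}, (chiB χ b.1)⁻¹ * φ (b.1 * (b₀ * x)))
        = ∑ b : {g : Gp // inB g}, chiB χ b₀ * ((chiB χ b.1)⁻¹ * φ (b.1 * x)) := by
      rw [← Equiv.sum_comp (shiftEquiv h₀)
        (fun b : {g : Gp // inB g} => (chiB χ b.1)⁻¹ * φ (b.1 * (b₀ * x)))]
      exact Finset.sum_congr rfl fun b _ => key b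
    show (cardB R' : ℂ)⁻¹ * (∑ b : {g : Gp // inB g}, (chiB χ b.1)⁻¹ * φ (b.1 * (b₀ * x)))
      = chiB χ b₀ * ((cardB R' : ℂ)⁻¹ * ∑ b : {g : Gp // inB g}, (chiB χ b.1)⁻¹ * φ (b.1 * x))
    rw [hsum, ← Finset.mul_sum]
    ring⟩
  map_add' φ ψ := by
    apply Subtype.ext
    funext x
    show (cardB R' : ℂ)⁻¹ * ∑ b : {g : Gp // inB g}, (chiB χ b.1)⁻¹ * (φ + ψ) (b.1 * x)
      = (cardB R' : ℂ)⁻¹ * (∑ b : {g : Gp // inB g}, (chiB χ b.1)⁻¹ * φ (b.1 * x))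
        + (cardB R' : ℂ)⁻¹ * (∑ b : {g : Gp // inB g}, (chiB χ b.1)⁻¹ * ψ (b.1 * x))
    rw [show (∑ b : {g : Gp // inB g}, (chiB χ b.1)⁻¹ * (φ + ψ) (b.1 * x))
        = ∑ b : {g : Gp // inB g},
            ((chiB χ b.1)⁻¹ * φ (b.1 * x) + (chiB χ b.1)⁻¹ * ψ (b.1 * x)) from
      Finset.sum_congr rfl fun b _ => by simp [Pi.add_apply, mul_add]]
    rw [Finset.sum_add_distrib, mul_add]
  map_smul' c φ := by
    apply Subtype.ext
    funext x
    show (cardB R' : ℂ)⁻¹ * ∑ b : {g : Gp // inB g}, (chiB χ b.1)⁻¹ * (c • φ) (b.1 * x)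
      = c * ((cardB R' : ℂ)⁻¹ * ∑ b : {g : Gp // inB g}, (chiB χ b.1)⁻¹ * φ (b.1 * x))
    rw [show (∑ b : {g : Gp // inB g}, (chiB χ b.1)⁻¹ * (c • φ) (b.1 * x))
        = ∑ b : {g : Gp // inB g}, c * ((chiB χ b.1)⁻¹ * φ (b.1 * x)) from
      Finset.sum_congr rfl fun b _ => by simp [Pi.smul_apply, smul_eq_mul]; ring]
    rw [← Finset.mul_sum]
    ring

lemma Pmap_incl (φ : Isub p n χ) : Pmap p n χ (φ : Gp → ℂ) = φ := by
  apply Subtype.ext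
  funext x
  show (cardB R' : ℂ)⁻¹ * ∑ b : {g : Gp // inB g}, (chiB χ b.1)⁻¹ * (φ : Gp → ℂ) (b.1 * x)
      = (φ : Gp → ℂ) x
  have key : ∀ b : {g : Gp // inB g},
      (chiB χ b.1)⁻¹ * (φ : Gp → ℂ) (b.1 * x) = (φ : Gp → ℂ) x := by
    intro b
    rw [φ.2 b.1 x b.2, ← mul_assoc, inv_mul_cancel₀ (chiB_ne_zero b.2), one_mul]
  rw [Finset.sum_congr rfl (fun b _ => key b), Finset.sum_const, Finset.card_univ,
    nsmul_eq_mul, ← mul_assoc, ← cardB_eq,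
    inv_mul_cancel₀ (cardB_ne_zero p n), one_mul]

/-- Convolution by `V` as a linear endomorphism of the full function space. -/
def Cmap (V : Gp → ℂ) : (Gp → ℂ) →ₗ[ℂ] (Gp → ℂ) where
  toFun φ := conv V φ
  map_add' φ ψ := by
    funext x
    show (cardB R' : ℂ)⁻¹ * ∑ y : Gp, V y * (φ + ψ) (y⁻¹ * x)
      = conv V φ x + conv V ψ x
    unfold conv
    rw [show (∑ y : Gp, V y * (φ + ψ) (y⁻¹ * x))
        = ∑ y : Gp, (V y * φ (y⁻¹ * x) + V y * ψ (y⁻¹ * x)) from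
      Finset.sum_congr rfl fun y _ => by simp [Pi.add_apply, mul_add]]
    rw [Finset.sum_add_distrib, mul_add]
  map_smul' c φ := by
    funext x
    show (cardB R' : ℂ)⁻¹ * ∑ y : Gp, V y * (c • φ) (y⁻¹ * x) = c * conv V φ x
    unfold conv
    rw [show (∑ y : Gp, V y * (c • φ) (y⁻¹ * x))
        = ∑ y : Gp, c * (V y * φ (y⁻¹ * x)) from
      Finset.sum_congr rfl fun y _ => by simp [Pi.smul_apply, smul_eq_mul]; ring]
    rw [← Finset.mul_sum]
    ring

end Main

/-- For `r ≤ j ≤ n−1`, the endomorphism `π_L(V_j) : φ ↦ V_j * φ` of `I(n)` has trace `0`. -/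
theorem stmt14 (p n r : ℕ) [Fact p.Prime] (hn : 1 ≤ n) (hr : 1 ≤ r) (hrn : r ≤ n)
    (χ : (ZMod (p ^ n))ˣ →* ℂˣ) (hχ : hasConductor p n r χ)
    (j : ℕ) (hj : r ≤ j) (hjn : j ≤ n - 1)
    (V : GL (Fin 2) (ZMod (p ^ n)) → ℂ) (hV : isV p n χ j V)
    (E : Isub p n χ →ₗ[ℂ] Isub p n χ)
    (hE : ∀ φ : Isub p n χ, (E φ : GL (Fin 2) (ZMod (p ^ n)) → ℂ) = conv V φ) :
    LinearMap.trace ℂ (Isub p n χ) E = 0 := by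
  have hEeq : E = (Pmap p n χ) ∘ₗ ((Cmap p n V) ∘ₗ (Isub p n χ).subtype) := by
    apply LinearMap.ext
    intro φ
    have h1 : (Cmap p n V) ((Isub p n χ).subtype φ) = (Isub p n χ).subtype (E φ) := by
      show conv V (φ : GL (Fin 2) (ZMod (p ^ n)) → ℂ)
        = ((E φ : Isub p n χ) : GL (Fin 2) (ZMod (p ^ n)) → ℂ)
      exact (hE φ).symm
    rw [LinearMap.comp_apply, LinearMap.comp_apply, h1]
    exact (Pmap_incl p n χ (E φ)).symm
  rw [hEeq, LinearMap.trace_comp_comm',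
    LinearMap.trace_eq_matrix_trace ℂ (Pi.basisFun ℂ (GL (Fin 2) (ZMod (p ^ n)))),
    Matrix.trace]
  apply Finset.sum_eq_zero
  intro x _
  rw [Matrix.diag_apply, LinearMap.toMatrix_apply, Pi.basisFun_repr, Pi.basisFun_apply]
  show conv V ((Pmap p n χ (Pi.single x (1:ℂ))
      : Isub p n χ) : GL (Fin 2) (ZMod (p ^ n)) → ℂ) x = 0
  have key : ∀ y : GL (Fin 2) (ZMod (p ^ n)),
      V y * ((Pmap p n χ (Pi.single x (1:ℂ))
        : Isub p n χ) : GL (Fin 2) (ZMod (p ^ n)) → ℂ) (y⁻¹ * x) = 0 := by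
    intro y
    by_cases hy : inB y
    · rw [V_inB_eq_zero hn hjn hV hy, zero_mul]
    · have hz : ∀ b : {g : GL (Fin 2) (ZMod (p ^ n)) // inB g},
          (Pi.single x (1:ℂ) : GL (Fin 2) (ZMod (p ^ n)) → ℂ) (b.1 * (y⁻¹ * x)) = 0 := by
        intro b
        refine Pi.single_eq_of_ne ?_ 1
        intro h
        apply hy
        have h2 : (b.1 * y⁻¹) * x = 1 * x := by
          rw [one_mul, mul_assoc]; exact h
        have h3 : b.1 * y⁻¹ = 1 := mul_right_cancel h2
        have hb : y = b.1 := (mul_inv_eq_one.mp h3).symm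
        rw [hb]; exact b.2
      show V y * ((cardB (ZMod (p ^ n)) : ℂ)⁻¹ *
          ∑ b : {g : GL (Fin 2) (ZMod (p ^ n)) // inB g},
            (chiB χ b.1)⁻¹ * (Pi.single x (1:ℂ) : GL (Fin 2) (ZMod (p ^ n)) → ℂ) (b.1 * (y⁻¹ * x))) = 0
      rw [Finset.sum_eq_zero (fun b _ => by rw [hz b, mul_zero]), mul_zero, mul_zero]
  show (cardB (ZMod (p ^ n)) : ℂ)⁻¹ * ∑ y : GL (Fin 2) (ZMod (p ^ n)),
      V y * ((Pmap p n χ (Pi.single x (1:ℂ))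
        : Isub p n χ) : GL (Fin 2) (ZMod (p ^ n)) → ℂ) (y⁻¹ * x) = 0
  rw [Finset.sum_eq_zero (fun y _ => key y), mul_zero]

end
end

section
/- Let p be a prime, M ≥ 1 with p ∤ M, n ≥ 1, N = pⁿM, and 1 ≤ r ≤ n. For each j with r ≤ j ≤ n−1 let S_j ⊂ ℤ be a set of integers representing each residue class of (ℤ/p^{n−j}ℤ)ˣ exactly once, and for each s ∈ S_j let A_{s,j} ∈ SL₂(ℤ) be any matrix whose bottom row is (p^j M, p^{n−j} − sM). Then every element of Γ₀(p^r M) lies in exactly one of the right cosets Γ₀(N)·1 and Γ₀(N)·A_{s,j} (for r ≤ j ≤ n−1 and s ∈ S_j), and these cosets are pairwise distinct; in particular the index of Γ₀(N) in Γ₀(p^r M) equals 1 + Σ_{j=r}^{n−1} p^{n−j−1}(p−1) = p^{n−r}. -/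
open scoped MatrixGroups
open CongruenceSubgroup

lemma coset_iff16 (N : ℕ) (γ B : SL(2, ℤ)) :
    (∃ δ ∈ Gamma0 N, γ = δ * B) ↔
      ((N : ℤ) ∣ ((γ : Matrix (Fin 2) (Fin 2) ℤ) 1 0 * (B : Matrix (Fin 2) (Fin 2) ℤ) 1 1
        - (γ : Matrix (Fin 2) (Fin 2) ℤ) 1 1 * (B : Matrix (Fin 2) (Fin 2) ℤ) 1 0)) := by
  have key : ∀ δ : SL(2, ℤ),
      ((δ * B) : Matrix (Fin 2) (Fin 2) ℤ) 1 0 * (B : Matrix (Fin 2) (Fin 2) ℤ) 1 1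
        - ((δ * B) : Matrix (Fin 2) (Fin 2) ℤ) 1 1 * (B : Matrix (Fin 2) (Fin 2) ℤ) 1 0
        = (δ : Matrix (Fin 2) (Fin 2) ℤ) 1 0 := by
    intro δ
    have hdet : (B : Matrix (Fin 2) (Fin 2) ℤ) 0 0 * (B : Matrix (Fin 2) (Fin 2) ℤ) 1 1
        - (B : Matrix (Fin 2) (Fin 2) ℤ) 0 1 * (B : Matrix (Fin 2) (Fin 2) ℤ) 1 0 = 1 := by
      have := B.2; rwa [Matrix.det_fin_two] at this
    simp only [Matrix.SpecialLinearGroup.coe_mul, Matrix.mul_apply, Fin.sum_univ_two]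
    linear_combination (δ : Matrix (Fin 2) (Fin 2) ℤ) 1 0 * hdet
  constructor
  · rintro ⟨δ, hδ, rfl⟩
    rw [Matrix.SpecialLinearGroup.coe_mul, key]
    exact (ZMod.intCast_zmod_eq_zero_iff_dvd _ _).1 (Gamma0_mem.1 hδ)
  · intro h
    refine ⟨γ * B⁻¹, ?_, by group⟩
    rw [Gamma0_mem]
    show ((((γ * B⁻¹) : SL(2, ℤ)) : Matrix (Fin 2) (Fin 2) ℤ) 1 0 : ZMod N) = 0
    rw [ZMod.intCast_zmod_eq_zero_iff_dvd]
    have := key (γ * B⁻¹)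
    rw [← Matrix.SpecialLinearGroup.coe_mul, inv_mul_cancel_right] at this
    rw [← this]
    exact h

lemma isUnit_zmod_int16 {p k : ℕ} (hp : p.Prime) (hk : 0 < k) (x : ℤ) :
    IsUnit ((x : ZMod (p ^ k))) ↔ ¬ (p : ℤ) ∣ x := by
  have h2 : (p : ℤ) ∣ x ↔ p ∣ x.natAbs := Int.natCast_dvd
  have h3 : ((x : ZMod (p ^ k))) = (x.natAbs : ZMod (p ^ k)) ∨
      ((x : ZMod (p ^ k))) = -(x.natAbs : ZMod (p ^ k)) := by
    rcases Int.natAbs_eq x with h | h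
    · left; nth_rewrite 1 [h]; rw [Int.cast_natCast]
    · right; nth_rewrite 1 [h]; rw [Int.cast_neg, Int.cast_natCast]
  have h4 : IsUnit ((x : ZMod (p ^ k))) ↔ IsUnit ((x.natAbs : ZMod (p ^ k))) := by
    rcases h3 with h | h
    · rw [h]
    · rw [h, IsUnit.neg_iff]
  rw [h2, h4, ZMod.isUnit_iff_coprime, Nat.coprime_pow_right_iff hk,
    Nat.coprime_comm, Nat.Prime.coprime_iff_not_dvd hp]

lemma geo16 (p : ℕ) (hp : 1 ≤ p) (m : ℕ) :
    1 + ∑ i ∈ Finset.range m, p ^ i * (p - 1) = p ^ m := by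
  induction m with
  | zero => simp
  | succ m ih =>
    rw [Finset.sum_range_succ, ← add_assoc, ih, pow_succ]
    calc p ^ m + p ^ m * (p - 1) = p ^ m * (1 + (p - 1)) := by ring
    _ = p ^ m * p := by rw [show 1 + (p - 1) = p by omega]

/-- the divisibility condition for membership in the coset of `A j s`. -/
def Cnd16 (p M n : ℕ) (c d : ℤ) (j : ℕ) (s : ℤ) : Prop :=
  ((p : ℤ) ^ n * M) ∣ (c * ((p : ℤ) ^ (n - j) - s * M) - d * ((p : ℤ) ^ j * M))

lemma L1of16 {p M n : ℕ} {c d : ℤ} (hp : p.Prime) (hM : 1 ≤ M) (hn : 1 ≤ n)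
    {j : ℕ} {s : ℤ} (hj2 : j ≤ n - 1) (hd : ¬ (p : ℤ) ∣ d)
    (hcond : Cnd16 p M n c d j s) (hNc : ((p : ℤ) ^ n * M) ∣ c) : False := by
  have h1 : ((p : ℤ) ^ n * M) ∣ d * ((p : ℤ) ^ j * M) := by
    have := dvd_sub (hNc.mul_right ((p : ℤ) ^ (n - j) - s * M)) hcond
    simpa using this
  have hMne : (M : ℤ) ≠ 0 := by exact_mod_cast (by omega : M ≠ 0)
  have hpj : ((p : ℤ) ^ j * M) ≠ 0 := mul_ne_zero (pow_ne_zero _ (by exact_mod_cast hp.pos.ne')) hMne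
  rw [show (p : ℤ) ^ n * M = (p : ℤ) ^ (n - j) * ((p : ℤ) ^ j * M) by
      rw [← mul_assoc, ← pow_add]; congr 2; omega] at h1
  have h2 : ((p : ℤ) ^ (n - j)) ∣ d := (mul_dvd_mul_iff_right hpj).mp h1
  exact hd (dvd_trans (dvd_pow_self (p : ℤ) (by omega : n - j ≠ 0)) h2)

lemma L2of16 {p M n : ℕ} {c d : ℤ} (hp : p.Prime) (hM : 1 ≤ M) (hpM : ¬ p ∣ M) (hn : 1 ≤ n)
    {j : ℕ} {s : ℤ} (hj2 : j ≤ n - 1) (hd : ¬ (p : ℤ) ∣ d) (hs : ¬ (p : ℤ) ∣ s)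
    (hcond : Cnd16 p M n c d j s) :
    (p : ℤ) ^ j ∣ c ∧ ¬ (p : ℤ) ^ (j + 1) ∣ c := by
  have hq : Prime (p : ℤ) := Nat.prime_iff_prime_int.mp hp
  have hjn : j < n := by omega
  have hpMi : ¬ (p : ℤ) ∣ (M : ℤ) := fun h => hpM (Int.natCast_dvd_natCast.mp h)
  have hw : ¬ (p : ℤ) ∣ ((p : ℤ) ^ (n - j) - s * M) := by
    intro h
    have h1 : (p : ℤ) ∣ (p : ℤ) ^ (n - j) := dvd_pow_self _ (by omega : n - j ≠ 0)
    have h2 : (p : ℤ) ∣ s * M := (dvd_sub_right h1).mp h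
    rcases hq.dvd_mul.mp h2 with h | h
    · exact hs h
    · exact hpMi h
  have hcop : IsCoprime ((p : ℤ) ^ j) ((p : ℤ) ^ (n - j) - s * M) :=
    ((Prime.coprime_iff_not_dvd hq).mpr hw).pow_left
  have hX : (p : ℤ) ^ j ∣ c * ((p : ℤ) ^ (n - j) - s * M) := by
    have h1 : ((p : ℤ)) ^ j ∣ (p : ℤ) ^ n * M := (pow_dvd_pow _ hjn.le).mul_right _
    have h2 : ((p : ℤ)) ^ j ∣ d * ((p : ℤ) ^ j * M) := ⟨d * M, by ring⟩
    have h3 := dvd_add (h1.trans hcond) h2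
    simpa using h3
  refine ⟨hcop.dvd_of_dvd_mul_right hX, fun hj1 => ?_⟩
  have h1 : ((p : ℤ)) ^ (j + 1) ∣ c * ((p : ℤ) ^ (n - j) - s * M) := hj1.mul_right _
  have h2 : ((p : ℤ)) ^ (j + 1) ∣ (p : ℤ) ^ n * M := (pow_dvd_pow _ (by omega)).mul_right _
  have h3 : ((p : ℤ)) ^ (j + 1) ∣ d * ((p : ℤ) ^ j * M) := by
    have := dvd_sub h1 (h2.trans hcond)
    simpa using this
  have hpjne : ((p : ℤ)) ^ j ≠ 0 := pow_ne_zero _ (by exact_mod_cast hp.pos.ne')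
  rw [show ((p : ℤ)) ^ (j + 1) = (p : ℤ) * (p : ℤ) ^ j by ring,
    show d * ((p : ℤ) ^ j * M) = (d * M) * (p : ℤ) ^ j by ring] at h3
  have h4 : ((p : ℤ)) ∣ d * M := (mul_dvd_mul_iff_right hpjne).mp h3
  rcases hq.dvd_mul.mp h4 with h | h
  · exact hd h
  · exact hpMi h

lemma L4of16 {p M n r : ℕ} {c d : ℤ} (hp : p.Prime) (hM : 1 ≤ M) (hpM : ¬ p ∣ M)
    (hn : 1 ≤ n) (hr : 1 ≤ r) (hrn : r ≤ n) (hd : ¬ (p : ℤ) ∣ d)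
    (hc : ((p : ℤ) ^ r * M) ∣ c) (hNc : ¬ ((p : ℤ) ^ n * M) ∣ c) :
    ∃ j, r ≤ j ∧ j ≤ n - 1 ∧ ((p : ℤ) ^ j ∣ c ∧ ¬ (p : ℤ) ^ (j + 1) ∣ c) ∧
      ∃ u : (ZMod (p ^ (n - j)))ˣ, ∀ s : ℤ,
        (Cnd16 p M n c d j s ↔ ((s : ZMod (p ^ (n - j))) = (u : ZMod (p ^ (n - j))))) := by
  have hq : Prime (p : ℤ) := Nat.prime_iff_prime_int.mp hp
  have hpMi : ¬ (p : ℤ) ∣ (M : ℤ) := fun h => hpM (Int.natCast_dvd_natCast.mp h)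
  have hMne : (M : ℤ) ≠ 0 := by exact_mod_cast (by omega : M ≠ 0)
  have hc0 : c ≠ 0 := by rintro rfl; exact hNc (dvd_zero _)
  set k := c.natAbs.factorization p with hk
  have dvd_iff : ∀ a : ℕ, ((p : ℤ) ^ a ∣ c ↔ a ≤ k) := by
    intro a
    rw [show (p : ℤ) ^ a = ((p ^ a : ℕ) : ℤ) by push_cast; ring, Int.natCast_dvd,
      Nat.Prime.pow_dvd_iff_le_factorization hp (Int.natAbs_ne_zero.mpr hc0)]
  have hMc : (M : ℤ) ∣ c := (dvd_mul_left _ _).trans hc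
  have hrk : r ≤ k := (dvd_iff r).mp ((dvd_mul_right _ _).trans hc)
  have hcopnM : ∀ a : ℕ, IsCoprime ((p : ℤ) ^ a) (M : ℤ) := fun a =>
    ((Prime.coprime_iff_not_dvd hq).mpr hpMi).pow_left
  have hkn : k ≤ n - 1 := by
    by_contra hcon
    have hnk : n ≤ k := by omega
    exact hNc ((hcopnM n).mul_dvd ((dvd_iff n).mpr hnk) hMc)
  have hnk1 : 0 < n - k := by omega
  refine ⟨k, hrk, hkn, ⟨(dvd_iff k).mpr le_rfl, fun h => absurd ((dvd_iff (k+1)).mp h) (by omega)⟩, ?_⟩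
  obtain ⟨e, he⟩ : ((p : ℤ) ^ k * M) ∣ c := (hcopnM k).mul_dvd ((dvd_iff k).mpr le_rfl) hMc
  have hpe : ¬ (p : ℤ) ∣ e := by
    rintro ⟨e', he'⟩
    exact absurd ((dvd_iff (k+1)).mp ⟨M * e', by rw [he, he']; push_cast; ring⟩) (by omega)
  have hue : IsUnit ((e * (M : ℤ) : ℤ) : ZMod (p ^ (n - k))) := by
    rw [isUnit_zmod_int16 hp hnk1]
    exact fun h => (hq.dvd_mul.mp h).elim hpe hpMi
  have hud : IsUnit (((-d : ℤ)) : ZMod (p ^ (n - k))) := by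
    rw [isUnit_zmod_int16 hp hnk1, dvd_neg]
    exact hd
  set w := hue.unit with hwdef
  refine ⟨hud.unit * w⁻¹, fun s => ?_⟩
  have hMzne : ((p : ℤ) ^ k * M) ≠ 0 :=
    mul_ne_zero (pow_ne_zero _ (by exact_mod_cast hp.pos.ne')) hMne
  have step1 : Cnd16 p M n c d k s ↔ (p : ℤ) ^ (n - k) ∣ (e * s * M + d) := by
    unfold Cnd16
    rw [show c * ((p : ℤ) ^ (n - k) - s * M) - d * ((p : ℤ) ^ k * M)
        = (e * (p : ℤ) ^ (n - k) - (e * s * M + d)) * ((p : ℤ) ^ k * M) by rw [he]; ring,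
      show (p : ℤ) ^ n * M = (p : ℤ) ^ (n - k) * ((p : ℤ) ^ k * M) by
        rw [← mul_assoc, ← pow_add]; congr 2; omega,
      mul_dvd_mul_iff_right hMzne,
      dvd_sub_right (dvd_mul_left _ e)]
  have step2 : (p : ℤ) ^ (n - k) ∣ (e * s * M + d) ↔
      (((e * s * M + d : ℤ)) : ZMod (p ^ (n - k))) = 0 := by
    rw [ZMod.intCast_zmod_eq_zero_iff_dvd]
    push_cast
    rfl
  rw [step1, step2]
  have hw : (w : ZMod (p ^ (n - k)))
      = ((e : ℤ) : ZMod (p ^ (n - k))) * ((M : ℤ) : ZMod (p ^ (n - k))) := by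
    rw [hwdef, IsUnit.unit_spec]
    push_cast
    ring
  have hcast : (((e * s * M + d : ℤ)) : ZMod (p ^ (n - k)))
      = (w : ZMod (p ^ (n - k))) * ((s : ℤ) : ZMod (p ^ (n - k)))
        + ((d : ℤ) : ZMod (p ^ (n - k))) := by
    rw [hw]; push_cast; ring
  rw [hcast, add_eq_zero_iff_eq_neg, ← Units.eq_inv_mul_iff_mul_eq]
  have hu : ((hud.unit * w⁻¹ : (ZMod (p ^ (n - k)))ˣ) : ZMod (p ^ (n - k)))
      = ↑w⁻¹ * (-(((d : ℤ)) : ZMod (p ^ (n - k)))) := by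
    rw [Units.val_mul, IsUnit.unit_spec]
    push_cast
    ring
  rw [hu]

/-- Let `N = pⁿM` with `p ∤ M`. Given, for each `r ≤ j ≤ n−1`, a set `S j` of integers
representing each class of `(ℤ/p^{n−j}ℤ)ˣ` exactly once, and matrices
`A_{s,j} ∈ SL₂(ℤ)` with bottom row `(p^j M, p^{n−j} − sM)`, every element of `Γ₀(p^r M)`
lies in exactly one of the right cosets `Γ₀(N)·1`, `Γ₀(N)·A_{s,j}`; in particular the
index of `Γ₀(N)` in `Γ₀(p^r M)` is `1 + Σ_{j=r}^{n−1} p^{n−j−1}(p−1) = p^{n−r}`. -/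
theorem stmt16 (p M n r : ℕ) (hp : p.Prime) (hM : 1 ≤ M) (hpM : ¬ p ∣ M)
    (hn : 1 ≤ n) (hr : 1 ≤ r) (hrn : r ≤ n)
    (S : ℕ → Finset ℤ)
    (hSunit : ∀ j, r ≤ j → j ≤ n - 1 → ∀ s ∈ S j, IsUnit ((s : ZMod (p ^ (n - j)))))
    (hSrep : ∀ j, r ≤ j → j ≤ n - 1 → ∀ u : (ZMod (p ^ (n - j)))ˣ,
      ∃! s, s ∈ S j ∧ ((s : ZMod (p ^ (n - j))) = (u : ZMod (p ^ (n - j)))))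
    (A : ℕ → ℤ → SL(2, ℤ))
    (hA : ∀ j, r ≤ j → j ≤ n - 1 → ∀ s ∈ S j,
      ((A j s : Matrix (Fin 2) (Fin 2) ℤ) 1 0 = (p : ℤ) ^ j * M ∧
        (A j s : Matrix (Fin 2) (Fin 2) ℤ) 1 1 = (p : ℤ) ^ (n - j) - s * M)) :
    (∀ γ : SL(2, ℤ), γ ∈ CongruenceSubgroup.Gamma0 (p ^ r * M) →
      ∃! o : Option (ℕ × ℤ),
        o.elim (γ ∈ CongruenceSubgroup.Gamma0 (p ^ n * M))
          (fun x => (r ≤ x.1 ∧ x.1 ≤ n - 1 ∧ x.2 ∈ S x.1) ∧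
            ∃ δ ∈ CongruenceSubgroup.Gamma0 (p ^ n * M), γ = δ * A x.1 x.2)) ∧
    1 + ∑ j ∈ Finset.Icc r (n - 1), p ^ (n - j - 1) * (p - 1) = p ^ (n - r) ∧
    (CongruenceSubgroup.Gamma0 (p ^ n * M)).relIndex
        (CongruenceSubgroup.Gamma0 (p ^ r * M)) = p ^ (n - r) := by
  classical
  have hcast : ((p ^ n * M : ℕ) : ℤ) = (p : ℤ) ^ n * M := by push_cast; ring
  have hcastr : ((p ^ r * M : ℕ) : ℤ) = (p : ℤ) ^ r * M := by push_cast; ring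
  have hmemN : ∀ γ : SL(2, ℤ), γ ∈ Gamma0 (p ^ n * M) ↔
      ((p : ℤ) ^ n * (M : ℤ)) ∣ ((γ : Matrix (Fin 2) (Fin 2) ℤ) 1 0) := by
    intro γ
    constructor
    · intro h
      have := (ZMod.intCast_zmod_eq_zero_iff_dvd _ _).mp (Gamma0_mem.mp h)
      rwa [hcast] at this
    · intro h
      rw [Gamma0_mem]
      exact (ZMod.intCast_zmod_eq_zero_iff_dvd _ _).mpr (by rw [hcast]; exact h)
  have hmemr : ∀ γ : SL(2, ℤ), γ ∈ Gamma0 (p ^ r * M) ↔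
      ((p : ℤ) ^ r * (M : ℤ)) ∣ ((γ : Matrix (Fin 2) (Fin 2) ℤ) 1 0) := by
    intro γ
    constructor
    · intro h
      have := (ZMod.intCast_zmod_eq_zero_iff_dvd _ _).mp (Gamma0_mem.mp h)
      rwa [hcastr] at this
    · intro h
      rw [Gamma0_mem]
      exact (ZMod.intCast_zmod_eq_zero_iff_dvd _ _).mpr (by rw [hcastr]; exact h)
  have hdfact : ∀ γ : SL(2, ℤ), γ ∈ Gamma0 (p ^ r * M) →
      ¬ (p : ℤ) ∣ (γ : Matrix (Fin 2) (Fin 2) ℤ) 1 1 := by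
    intro γ hγ hdd
    have hcc : (p : ℤ) ∣ (γ : Matrix (Fin 2) (Fin 2) ℤ) 1 0 :=
      ((dvd_pow_self (p : ℤ) (by omega : r ≠ 0)).mul_right (M : ℤ)).trans ((hmemr γ).mp hγ)
    have hdet : (γ : Matrix (Fin 2) (Fin 2) ℤ) 0 0 * (γ : Matrix (Fin 2) (Fin 2) ℤ) 1 1
        - (γ : Matrix (Fin 2) (Fin 2) ℤ) 0 1 * (γ : Matrix (Fin 2) (Fin 2) ℤ) 1 0 = 1 := by
      have := γ.2; rwa [Matrix.det_fin_two] at this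
    have h1 : (p : ℤ) ∣ 1 := hdet ▸ dvd_sub (hdd.mul_left _) (hcc.mul_left _)
    have h2 : (p : ℤ) ≤ 1 := Int.le_of_dvd one_pos h1
    have := hp.one_lt
    omega
  have Ptrans : ∀ γ : SL(2, ℤ), ∀ j s, r ≤ j → j ≤ n - 1 → s ∈ S j →
      ((∃ δ ∈ Gamma0 (p ^ n * M), γ = δ * A j s) ↔
        Cnd16 p M n ((γ : Matrix (Fin 2) (Fin 2) ℤ) 1 0)
          ((γ : Matrix (Fin 2) (Fin 2) ℤ) 1 1) j s) := by
    intro γ j s hj1 hj2 hsS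
    rw [coset_iff16, (hA j hj1 hj2 s hsS).1, (hA j hj1 hj2 s hsS).2, hcast]
    rfl
  have part1 : ∀ γ : SL(2, ℤ), γ ∈ Gamma0 (p ^ r * M) →
      ∃! o : Option (ℕ × ℤ),
        o.elim (γ ∈ Gamma0 (p ^ n * M))
          (fun x => (r ≤ x.1 ∧ x.1 ≤ n - 1 ∧ x.2 ∈ S x.1) ∧
            ∃ δ ∈ Gamma0 (p ^ n * M), γ = δ * A x.1 x.2) := by
    intro γ hγ
    have hc : ((p : ℤ) ^ r * M) ∣ (γ : Matrix (Fin 2) (Fin 2) ℤ) 1 0 := (hmemr γ).mp hγ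
    have hd : ¬ (p : ℤ) ∣ (γ : Matrix (Fin 2) (Fin 2) ℤ) 1 1 := hdfact γ hγ
    by_cases hNc : ((p : ℤ) ^ n * (M : ℤ)) ∣ (γ : Matrix (Fin 2) (Fin 2) ℤ) 1 0
    · refine ⟨none, (hmemN γ).mpr hNc, ?_⟩
      rintro (_ | ⟨j, s⟩) ho
      · rfl
      · exfalso
        obtain ⟨⟨hj1, hj2, hsS⟩, hδ⟩ := ho
        exact L1of16 hp hM hn hj2 hd ((Ptrans γ j s hj1 hj2 hsS).mp hδ) hNc
    · obtain ⟨j, hj1, hj2, ⟨hpjc, hpj1⟩, u, hiff⟩ := L4of16 hp hM hpM hn hr hrn hd hc hNc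
      obtain ⟨s, ⟨hsS, hsu⟩, hsuniq⟩ := hSrep j hj1 hj2 u
      refine ⟨some (j, s),
        ⟨⟨hj1, hj2, hsS⟩, (Ptrans γ j s hj1 hj2 hsS).mpr ((hiff s).mpr hsu)⟩, ?_⟩
      rintro (_ | ⟨j', s'⟩) ho
      · exact absurd ((hmemN γ).mp ho) hNc
      · obtain ⟨⟨hj1', hj2', hsS'⟩, hδ'⟩ := ho
        have hcond' := (Ptrans γ j' s' hj1' hj2' hsS').mp hδ'
        have hs' : ¬ (p : ℤ) ∣ s' := by
          have := hSunit j' hj1' hj2' s' hsS'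
          rwa [isUnit_zmod_int16 hp (by omega : 0 < n - j')] at this
        obtain ⟨hpjc', hpj1'⟩ := L2of16 hp hM hpM hn hj2' hd hs' hcond'
        have hjj : j' = j := by
          by_contra hne
          rcases Nat.lt_or_ge j' j with hlt | hge
          · exact hpj1' ((pow_dvd_pow _ (by omega)).trans hpjc)
          · exact hpj1 ((pow_dvd_pow _ (by omega)).trans hpjc')
        subst hjj
        have hss : s' = s := hsuniq s' ⟨hsS', (hiff s').mp hcond'⟩
        rw [hss]
  have part2 : 1 + ∑ j ∈ Finset.Icc r (n - 1), p ^ (n - j - 1) * (p - 1) = p ^ (n - r) := by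
    have hre : ∑ j ∈ Finset.Icc r (n - 1), p ^ (n - j - 1) * (p - 1)
        = ∑ i ∈ Finset.range (n - r), p ^ i * (p - 1) := by
      apply Finset.sum_nbij' (i := fun j => n - 1 - j) (j := fun i => n - 1 - i)
      · intro a ha
        rw [Finset.mem_Icc] at ha
        rw [Finset.mem_range]
        omega
      · intro a ha
        rw [Finset.mem_range] at ha
        rw [Finset.mem_Icc]
        omega
      · intro a ha
        rw [Finset.mem_Icc] at ha
        omega
      · intro a ha
        rw [Finset.mem_range] at ha
        omega
      · intro a ha
        rw [Finset.mem_Icc] at ha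
        rw [show n - a - 1 = n - 1 - a by omega]
    rw [hre]
    exact geo16 p hp.pos (n - r)
  refine ⟨part1, part2, ?_⟩
  -- index computation
  have hφex : ∀ γ : Gamma0 (p ^ r * M), ∃ o : Option (ℕ × ℤ),
      (o.elim ((γ : SL(2, ℤ)) ∈ Gamma0 (p ^ n * M))
        (fun x => (r ≤ x.1 ∧ x.1 ≤ n - 1 ∧ x.2 ∈ S x.1) ∧
          ∃ δ ∈ Gamma0 (p ^ n * M), (γ : SL(2, ℤ)) = δ * A x.1 x.2)) ∧
      ∀ o' : Option (ℕ × ℤ),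
        (o'.elim ((γ : SL(2, ℤ)) ∈ Gamma0 (p ^ n * M))
          (fun x => (r ≤ x.1 ∧ x.1 ≤ n - 1 ∧ x.2 ∈ S x.1) ∧
            ∃ δ ∈ Gamma0 (p ^ n * M), (γ : SL(2, ℤ)) = δ * A x.1 x.2)) → o' = o :=
    fun γ => ⟨(part1 γ γ.2).choose, (part1 γ γ.2).choose_spec.1, (part1 γ γ.2).choose_spec.2⟩
  set φ : Gamma0 (p ^ r * M) → Option (ℕ × ℤ) := fun γ => (hφex γ).choose with hφdef
  have hφP : ∀ γ : Gamma0 (p ^ r * M),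
      (φ γ).elim ((γ : SL(2, ℤ)) ∈ Gamma0 (p ^ n * M))
        (fun x => (r ≤ x.1 ∧ x.1 ≤ n - 1 ∧ x.2 ∈ S x.1) ∧
          ∃ δ ∈ Gamma0 (p ^ n * M), (γ : SL(2, ℤ)) = δ * A x.1 x.2) :=
    fun γ => (hφex γ).choose_spec.1
  have hφuniq : ∀ γ : Gamma0 (p ^ r * M), ∀ o' : Option (ℕ × ℤ),
      (o'.elim ((γ : SL(2, ℤ)) ∈ Gamma0 (p ^ n * M))
        (fun x => (r ≤ x.1 ∧ x.1 ≤ n - 1 ∧ x.2 ∈ S x.1) ∧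
          ∃ δ ∈ Gamma0 (p ^ n * M), (γ : SL(2, ℤ)) = δ * A x.1 x.2)) → o' = φ γ :=
    fun γ => (hφex γ).choose_spec.2
  have hPinv : ∀ (γ γ' : SL(2, ℤ)), (∃ h ∈ Gamma0 (p ^ n * M), γ' = h * γ) →
      ∀ o : Option (ℕ × ℤ),
      (o.elim (γ ∈ Gamma0 (p ^ n * M))
        (fun x => (r ≤ x.1 ∧ x.1 ≤ n - 1 ∧ x.2 ∈ S x.1) ∧
          ∃ δ ∈ Gamma0 (p ^ n * M), γ = δ * A x.1 x.2)) →
      (o.elim (γ' ∈ Gamma0 (p ^ n * M))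
        (fun x => (r ≤ x.1 ∧ x.1 ≤ n - 1 ∧ x.2 ∈ S x.1) ∧
          ∃ δ ∈ Gamma0 (p ^ n * M), γ' = δ * A x.1 x.2)) := by
    rintro γ γ' ⟨h, hh, rfl⟩ (_ | ⟨j, s⟩) ho
    · exact mul_mem hh ho
    · obtain ⟨hb, δ, hδ, hγe⟩ := ho
      exact ⟨hb, h * δ, mul_mem hh hδ, by rw [hγe, mul_assoc]⟩
  set H' := (Gamma0 (p ^ n * M)).subgroupOf (Gamma0 (p ^ r * M)) with hH'def
  have hlift : ∀ a b : Gamma0 (p ^ r * M), (QuotientGroup.rightRel H') a b → φ a = φ b := by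
    intro a b hab
    rw [QuotientGroup.rightRel_apply, hH'def, Subgroup.mem_subgroupOf] at hab
    have hba : (b : SL(2, ℤ)) = ((b * a⁻¹ : Gamma0 (p ^ r * M)) : SL(2, ℤ)) * (a : SL(2, ℤ)) := by
      push_cast
      group
    exact hφuniq b (φ a) (hPinv a b ⟨_, hab, hba⟩ (φ a) (hφP a))
  set T : Finset (Option (ℕ × ℤ)) :=
    insert none ((Finset.Icc r (n - 1)).biUnion fun j => (S j).image fun s => some (j, s))
    with hTdef
  have hmemT : ∀ γ : Gamma0 (p ^ r * M), φ γ ∈ T := by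
    intro γ
    have hPγ := hφP γ
    rcases ho : φ γ with _ | ⟨j, s⟩
    · rw [hTdef]; exact Finset.mem_insert_self _ _
    · rw [ho] at hPγ
      obtain ⟨⟨hj1, hj2, hsS⟩, -⟩ := hPγ
      rw [hTdef]
      exact Finset.mem_insert_of_mem (Finset.mem_biUnion.mpr
        ⟨j, Finset.mem_Icc.mpr ⟨hj1, hj2⟩, Finset.mem_image.mpr ⟨s, hsS, rfl⟩⟩)
  have hinj : ∀ a b : Gamma0 (p ^ r * M), φ a = φ b → (QuotientGroup.rightRel H') a b := by
    intro a b heq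
    rw [QuotientGroup.rightRel_apply, hH'def, Subgroup.mem_subgroupOf]
    have hPa := hφP a
    have hPb := hφP b
    rw [← heq] at hPb
    rcases ho : φ a with _ | ⟨j, s⟩
    · rw [ho] at hPa hPb
      have hco : ((b * a⁻¹ : Gamma0 (p ^ r * M)) : SL(2, ℤ))
          = (b : SL(2, ℤ)) * (a : SL(2, ℤ))⁻¹ := by push_cast; rfl
      rw [hco]
      exact mul_mem hPb (inv_mem hPa)
    · rw [ho] at hPa hPb
      obtain ⟨-, δ, hδ, he⟩ := hPa
      obtain ⟨-, δ', hδ', he'⟩ := hPb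
      have hco : ((b * a⁻¹ : Gamma0 (p ^ r * M)) : SL(2, ℤ)) = δ' * δ⁻¹ := by
        push_cast
        rw [he, he']
        group
      rw [hco]
      exact mul_mem hδ' (inv_mem hδ)
  have hsurjT : ∀ t ∈ T, ∃ γ : Gamma0 (p ^ r * M), φ γ = t := by
    intro t ht
    rw [hTdef, Finset.mem_insert] at ht
    rcases ht with rfl | ht
    · exact ⟨1, (hφuniq 1 none (one_mem _)).symm⟩
    · obtain ⟨j, hj, hx⟩ := Finset.mem_biUnion.mp ht
      obtain ⟨s, hsS, rfl⟩ := Finset.mem_image.mp hx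
      obtain ⟨hj1, hj2⟩ := Finset.mem_Icc.mp hj
      have hAK : A j s ∈ Gamma0 (p ^ r * M) := by
        apply (hmemr _).mpr
        rw [(hA j hj1 hj2 s hsS).1]
        exact mul_dvd_mul (pow_dvd_pow _ hj1) dvd_rfl
      refine ⟨⟨A j s, hAK⟩, ?_⟩
      exact (hφuniq ⟨A j s, hAK⟩ (some (j, s))
        ⟨⟨hj1, hj2, hsS⟩, 1, one_mem _, (one_mul _).symm⟩).symm
  -- the bijection
  let φbar : Quotient (QuotientGroup.rightRel H') → Option (ℕ × ℤ) := Quotient.lift φ hlift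
  let F : Quotient (QuotientGroup.rightRel H') → {x // x ∈ T} :=
    fun q => ⟨φbar q, by
      induction q using Quotient.inductionOn with
      | _ γ => exact hmemT γ⟩
  have hFbij : Function.Bijective F := by
    constructor
    · intro q q'
      induction q using Quotient.inductionOn with
      | _ a =>
        induction q' using Quotient.inductionOn with
        | _ b =>
          intro h
          exact Quotient.sound (hinj a b (congrArg Subtype.val h))
    · rintro ⟨t, ht⟩
      obtain ⟨γ, hγ⟩ := hsurjT t ht
      exact ⟨Quotient.mk _ γ, Subtype.ext hγ⟩
  have hcardeq : (CongruenceSubgroup.Gamma0 (p ^ n * M)).relIndex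
      (CongruenceSubgroup.Gamma0 (p ^ r * M)) = T.card := by
    show H'.index = T.card
    rw [Subgroup.index_eq_card, ← Nat.card_eq_finsetCard,
      ← Nat.card_congr (QuotientGroup.quotientRightRelEquivQuotientLeftRel H'),
      Nat.card_eq_of_bijective F hFbij]
  rw [hcardeq]
  -- compute the cardinality of T
  have hnone : (none : Option (ℕ × ℤ)) ∉
      (Finset.Icc r (n - 1)).biUnion fun j => (S j).image fun s => some (j, s) := by
    simp
  have hdisj : ∀ x ∈ Finset.Icc r (n - 1), ∀ y ∈ Finset.Icc r (n - 1), x ≠ y →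
      Disjoint ((S x).image fun s => (some (x, s) : Option (ℕ × ℤ)))
        ((S y).image fun s => (some (y, s) : Option (ℕ × ℤ))) := by
    intro x hx y hy hxy
    rw [Finset.disjoint_left]
    rintro o hox hoy
    obtain ⟨s, hs, rfl⟩ := Finset.mem_image.mp hox
    obtain ⟨s', hs', heq⟩ := Finset.mem_image.mp hoy
    exact hxy (congrArg Prod.fst (Option.some.inj heq)).symm
  have hcardim : ∀ j ∈ Finset.Icc r (n - 1),
      ((S j).image fun s => (some (j, s) : Option (ℕ × ℤ))).card = p ^ (n - j - 1) * (p - 1) := by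
    intro j hj
    obtain ⟨hj1, hj2⟩ := Finset.mem_Icc.mp hj
    rw [Finset.card_image_of_injective _ (fun a b hab => by simpa using hab)]
    haveI : NeZero (p ^ (n - j)) := ⟨pow_ne_zero _ hp.pos.ne'⟩
    have hcardS : (S j).card = Fintype.card (ZMod (p ^ (n - j)))ˣ := by
      rw [← Finset.card_univ]
      apply Finset.card_bij (fun s hs => (hSunit j hj1 hj2 s hs).unit)
      · intros
        exact Finset.mem_univ _
      · intro a ha b hb hab
        have h1 : ((a : ZMod (p ^ (n - j)))) = ((b : ZMod (p ^ (n - j)))) := by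
          have := congrArg (Units.val) hab
          rwa [IsUnit.unit_spec, IsUnit.unit_spec] at this
        obtain ⟨s0, hs0, huniq⟩ := hSrep j hj1 hj2 (hSunit j hj1 hj2 a ha).unit
        rw [huniq a ⟨ha, (IsUnit.unit_spec _).symm⟩,
          huniq b ⟨hb, by rw [← h1]; exact (IsUnit.unit_spec _).symm⟩]
      · intro u _
        obtain ⟨s, ⟨hsS, hsu⟩, -⟩ := hSrep j hj1 hj2 u
        exact ⟨s, hsS, Units.ext (by rw [IsUnit.unit_spec]; exact hsu)⟩
    rw [hcardS, ZMod.card_units_eq_totient, Nat.totient_prime_pow hp (by omega : 0 < n - j)]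
  rw [hTdef, Finset.card_insert_of_notMem hnone, Finset.card_biUnion hdisj,
    Finset.sum_congr rfl hcardim, add_comm]
  exact part2
end

section
/- (i) f∣ₖW = p^{k−1}·χ(p mod M)·f_p, where f_p : ℍ → ℂ is defined by f_p(z) = f(pz); (ii) f_p∣ₖW = p^{−1}·f. Consequently the Atkin–Lehner matrix W maps the function f to a multiple of f_p and maps f_p back to a multiple of f. -/
open UpperHalfPlane ModularForm
open scoped MatrixGroups ModularForm

/-- The point `p·z` of the upper half-plane. -/
noncomputable def scaleH (c : ℝ) (hc : 0 < c) (z : ℍ) : ℍ :=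
  ⟨c * (z : ℂ), by
    have hz := z.2
    rw [Complex.mul_im, Complex.ofReal_re, Complex.ofReal_im]
    simpa using mul_pos hc hz⟩

/-- Build an element of `GL(2,ℝ)⁺` from a matrix of positive determinant. -/
noncomputable def mkGLPos (A : Matrix (Fin 2) (Fin 2) ℝ) (h : 0 < A.det) : GL(2, ℝ)⁺ :=
  ⟨Matrix.GeneralLinearGroup.mkOfDetNeZero A h.ne', by
    simpa [Matrix.mem_glpos, Matrix.GeneralLinearGroup.val_det_apply] using h⟩

@[simp] lemma mkGLPos_coe (A : Matrix (Fin 2) (Fin 2) ℝ) (h : 0 < A.det) :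
    (((mkGLPos A h : GL(2, ℝ)⁺) : GL (Fin 2) ℝ) : Matrix (Fin 2) (Fin 2) ℝ) = A := rfl

@[simp] lemma SL_GLPos_entry (g : SL(2, ℤ)) (i j : Fin 2) :
    ((((g : GL(2, ℝ)⁺) : GL (Fin 2) ℝ) : Matrix (Fin 2) (Fin 2) ℝ)) i j
      = ((g : Matrix (Fin 2) (Fin 2) ℤ) i j : ℝ) := rfl

set_option maxHeartbeats 1000000 in
set_option synthInstance.maxHeartbeats 400000 in
/-- With `W = (pβ, 1; pMγ₀, p)` (of determinant `p`, where `pβ − Mγ₀ = 1`) and `f` of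
weight `k`, character `χ` and level `Γ₀(M)`:
(i) `f∣ₖW = p^{k−1}·χ(p)·f_p` where `f_p(z) = f(pz)`; (ii) `f_p∣ₖW = p⁻¹·f`. -/
theorem stmt18 (p M : ℕ) (hp : p.Prime) (hM : 1 ≤ M) (hpM : ¬ p ∣ M) (k : ℤ)
    (χ : DirichletCharacter ℂ M) (f : ℍ → ℂ)
    (hf : ∀ γ : SL(2, ℤ), γ ∈ CongruenceSubgroup.Gamma0 M →
      f ∣[k] γ = χ (((γ : Matrix (Fin 2) (Fin 2) ℤ) 1 1 : ℤ) : ZMod M) • f)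
    (β γ₀ : ℤ) (hβ : (p : ℤ) * β - (M : ℤ) * γ₀ = 1)
    (W : GL(2, ℝ)⁺)
    (hW : ((W : GL (Fin 2) ℝ) : Matrix (Fin 2) (Fin 2) ℝ) =
      !![(p : ℝ) * β, 1; (p : ℝ) * M * γ₀, (p : ℝ)]) :
    f ∣[k] (W : GL (Fin 2) ℝ) =
      ((p : ℂ) ^ (k - 1) * χ ((p : ℕ) : ZMod M)) •
        (fun z : ℍ => f (scaleH p (by exact_mod_cast hp.pos) z)) ∧
    (fun z : ℍ => f (scaleH p (by exact_mod_cast hp.pos) z)) ∣[k] (W : GL (Fin 2) ℝ) = (p : ℂ)⁻¹ • f := by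
  have hp0 : (0 : ℝ) < p := by exact_mod_cast hp.pos
  have hpC : ((p : ℂ)) ≠ 0 := by exact_mod_cast hp.pos.ne'
  -- the SL₂(ℤ) matrix γ₁ = (β, 1; Mγ₀, p)
  have hdet1 : (!![β, 1; (M : ℤ) * γ₀, (p : ℤ)] : Matrix (Fin 2) (Fin 2) ℤ).det = 1 := by
    simp [Matrix.det_fin_two_of]; linarith
  set γ₁ : SL(2, ℤ) := ⟨!![β, 1; (M : ℤ) * γ₀, (p : ℤ)], hdet1⟩ with hγ₁def
  have hγ₁mem : γ₁ ∈ CongruenceSubgroup.Gamma0 M := by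
    rw [CongruenceSubgroup.Gamma0_mem]
    simp [hγ₁def]
  -- the SL₂(ℤ) matrix γ₂ = (pβ, 1; Mγ₀, 1)
  have hdet2 : (!![(p : ℤ) * β, 1; (M : ℤ) * γ₀, 1] : Matrix (Fin 2) (Fin 2) ℤ).det = 1 := by
    simp [Matrix.det_fin_two_of]; linarith
  set γ₂ : SL(2, ℤ) := ⟨!![(p : ℤ) * β, 1; (M : ℤ) * γ₀, 1], hdet2⟩ with hγ₂def
  have hγ₂mem : γ₂ ∈ CongruenceSubgroup.Gamma0 M := by
    rw [CongruenceSubgroup.Gamma0_mem]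
    simp [hγ₂def]
  -- the matrices D = diag(p,1) and S = diag(p,p)
  have hDdet : (0 : ℝ) < (!![(p : ℝ), 0; 0, 1] : Matrix (Fin 2) (Fin 2) ℝ).det := by
    simpa [Matrix.det_fin_two_of] using hp0
  set D : GL(2, ℝ)⁺ := mkGLPos !![(p : ℝ), 0; 0, 1] hDdet with hDdef
  have hSdet : (0 : ℝ) < (!![(p : ℝ), 0; 0, (p : ℝ)] : Matrix (Fin 2) (Fin 2) ℝ).det := by
    simpa [Matrix.det_fin_two_of] using mul_pos hp0 hp0
  set S : GL(2, ℝ)⁺ := mkGLPos !![(p : ℝ), 0; 0, (p : ℝ)] hSdet with hSdef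
  -- W = γ₁ * D
  have hWeq : (W : GL (Fin 2) ℝ) = (γ₁ : GL (Fin 2) ℝ) * (D : GL (Fin 2) ℝ) := by
    apply Units.ext
    rw [hW]
    show _ = ((γ₁ : GL (Fin 2) ℝ) : Matrix (Fin 2) (Fin 2) ℝ) *
      ((D : GL (Fin 2) ℝ) : Matrix (Fin 2) (Fin 2) ℝ)
    ext i j
    fin_cases i <;> fin_cases j <;>
      simp only [Matrix.SpecialLinearGroup.coe_GL_coe_matrix, Matrix.SpecialLinearGroup.map_apply_coe, RingHom.mapMatrix_apply, Matrix.map_apply] <;>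
      simp [hγ₁def, hDdef, Matrix.mul_apply, Fin.sum_univ_two, Matrix.SpecialLinearGroup.mapGL_coe_matrix, Matrix.SpecialLinearGroup.map_apply_coe, RingHom.mapMatrix_apply, Int.coe_castRingHom, Matrix.map_apply] <;> ring
  -- D * W = S * γ₂
  have hDW : (D : GL (Fin 2) ℝ) * (W : GL (Fin 2) ℝ) = (S : GL (Fin 2) ℝ) * (γ₂ : GL (Fin 2) ℝ) := by
    apply Units.ext
    show ((D : GL (Fin 2) ℝ) : Matrix (Fin 2) (Fin 2) ℝ) *
        ((W : GL (Fin 2) ℝ) : Matrix (Fin 2) (Fin 2) ℝ) =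
      ((S : GL (Fin 2) ℝ) : Matrix (Fin 2) (Fin 2) ℝ) *
        ((γ₂ : GL (Fin 2) ℝ) : Matrix (Fin 2) (Fin 2) ℝ)
    rw [hW]
    ext i j
    fin_cases i <;> fin_cases j <;>
      simp only [Matrix.SpecialLinearGroup.coe_GL_coe_matrix, Matrix.SpecialLinearGroup.map_apply_coe, RingHom.mapMatrix_apply, Matrix.map_apply] <;>
      simp [hγ₂def, hDdef, hSdef, Matrix.mul_apply, Fin.sum_univ_two, Matrix.SpecialLinearGroup.mapGL_coe_matrix, Matrix.SpecialLinearGroup.map_apply_coe, RingHom.mapMatrix_apply, Int.coe_castRingHom, Matrix.map_apply] <;> ring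
  have hσpos : ∀ g : GL (Fin 2) ℝ, 0 < g.det.val → ∀ c : ℂ, σ g c = c := by
    intro g hg c
    simp only [σ, if_pos hg]
    rfl
  have hposD : 0 < ((D : GL (Fin 2) ℝ)).det.val := by
    simpa [hDdef, Matrix.det_fin_two_of] using hp0
  have hposS : 0 < ((S : GL (Fin 2) ℝ)).det.val := by
    simpa [hSdef, Matrix.det_fin_two_of] using mul_pos hp0 hp0
  have hpos1 : 0 < ((γ₁ : GL (Fin 2) ℝ)).det.val := by
    simp [Matrix.SpecialLinearGroup.det_mapGL]
  have hpos2 : 0 < ((γ₂ : GL (Fin 2) ℝ)).det.val := by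
    simp [Matrix.SpecialLinearGroup.det_mapGL]
  -- slash by D
  have hfD : ∀ g : ℍ → ℂ, g ∣[k] (D : GL (Fin 2) ℝ) =
      fun z : ℍ => g (scaleH p hp0 z) * (p : ℂ) ^ (k - 1) := by
    intro g
    funext z
    have hsmul : (D : GL (Fin 2) ℝ) • z = scaleH p hp0 z := by
      apply UpperHalfPlane.ext
      rw [UpperHalfPlane.coe_smul_of_det_pos hposD]
      simp [UpperHalfPlane.num, UpperHalfPlane.denom, hDdef, scaleH]
    rw [slash_apply, hsmul, hσpos _ hposD]
    simp [UpperHalfPlane.denom, hDdef, Matrix.det_fin_two_of]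
  -- slash by S
  have hfS : ∀ g : ℍ → ℂ, g ∣[k] (S : GL (Fin 2) ℝ) = ((p : ℂ) ^ (k - 2)) • g := by
    intro g
    funext z
    have hsmul : (S : GL (Fin 2) ℝ) • z = z := by
      apply UpperHalfPlane.ext
      rw [UpperHalfPlane.coe_smul_of_det_pos hposS]
      have hz : ((p : ℂ) * z + 0) / ((0 : ℂ) * z + p) = z := by
        simp only [zero_mul, add_zero, zero_add]; exact mul_div_cancel_left₀ _ hpC
      simpa [UpperHalfPlane.num, UpperHalfPlane.denom, hSdef] using hz
    rw [slash_apply, hsmul, hσpos _ hposS]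
    have hdet : ((|((S : GL (Fin 2) ℝ)).det.val| : ℝ) : ℂ) = (p : ℂ) ^ 2 := by
      simp [hSdef, Matrix.det_fin_two_of]; ring
    have hden : UpperHalfPlane.denom S z = (p : ℂ) := by
      simp [UpperHalfPlane.denom, hSdef]
    rw [hdet, hden]
    have : ((p : ℂ) ^ 2) ^ (k - 1) * (p : ℂ) ^ (-k) = (p : ℂ) ^ (k - 2) := by
      rw [← zpow_natCast ((p : ℂ)) 2, ← zpow_mul, ← zpow_add₀ hpC]
      ring_nf
    simp only [Pi.smul_apply, smul_eq_mul]
    rw [mul_assoc, this]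
    ring
  have hχp : χ ((((γ₁ : Matrix (Fin 2) (Fin 2) ℤ) 1 1 : ℤ) : ZMod M)) = χ ((p : ℕ) : ZMod M) := by
    congr 1
    simp [hγ₁def]
  have hχ1 : χ ((((γ₂ : Matrix (Fin 2) (Fin 2) ℤ) 1 1 : ℤ) : ZMod M)) = 1 := by
    have : ((γ₂ : Matrix (Fin 2) (Fin 2) ℤ) 1 1 : ℤ) = 1 := by simp [hγ₂def]
    rw [this]
    simpa using map_one χ
  constructor
  · -- part (i)
    rw [hWeq, SlashAction.slash_mul, ← SL_slash, hf γ₁ hγ₁mem, hχp, ModularForm.smul_slash,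
      hσpos _ hposD, hfD f]
    funext z
    simp only [Pi.smul_apply, smul_eq_mul]
    ring
  · -- part (ii)
    have hfp : (fun z : ℍ => f (scaleH p hp0 z)) = ((p : ℂ) ^ (1 - k)) • (f ∣[k] (D : GL (Fin 2) ℝ)) := by
      rw [hfD f]
      funext z
      simp only [Pi.smul_apply, smul_eq_mul]
      rw [← mul_assoc, mul_comm ((p : ℂ) ^ (1 - k)), mul_assoc, ← zpow_add₀ hpC]
      simp
    rw [hfp, ModularForm.smul_slash, hσpos _ ((Matrix.mem_glpos _).1 W.2), ← SlashAction.slash_mul, hDW, SlashAction.slash_mul,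
      hfS f, ModularForm.smul_slash, hσpos _ hpos2, ← SL_slash, hf γ₂ hγ₂mem, hχ1]
    funext z
    simp only [Pi.smul_apply, smul_eq_mul, one_smul]
    rw [← mul_assoc, ← zpow_add₀ hpC]
    norm_num
end

section
/- For every z ∈ ℍ one has Σ_{s=0}^{p−1} (f∣ₖW)((z+s)/p) = p^k · χ(p mod M) · f(z). (Equivalently, f is an eigenfunction with eigenvalue p of the operator Q_p = \bar{χ}(p)·p^{1−k/2}·U_p·W_p of the paper.) -/
open UpperHalfPlane ModularForm
open scoped MatrixGroups ModularForm

/-- The point `(z+t)/c` of the upper half-plane (`c > 0`, `t` real). -/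
noncomputable def shiftDivH (c : ℝ) (hc : 0 < c) (t : ℝ) (z : ℍ) : ℍ :=
  ⟨((z : ℂ) + (t : ℂ)) / (c : ℂ), by
    have hz := z.2
    rw [Complex.div_im]
    simp only [Complex.add_im, Complex.ofReal_im, Complex.ofReal_re, Complex.add_re,
      Complex.normSq_ofReal, add_zero, zero_mul, mul_zero, sub_zero, zero_div]
    positivity⟩

set_option maxHeartbeats 1000000
set_option synthInstance.maxHeartbeats 200000

/-- With `W = (pβ, 1; pMγ₀, p)` (of determinant `p`, where `pβ − Mγ₀ = 1`) and `f` of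
weight `k`, character `χ` and level `Γ₀(M)`:
`Σ_{s=0}^{p−1} (f∣ₖW)((z+s)/p) = p^k·χ(p)·f(z)` for all `z ∈ ℍ`. -/
theorem stmt19 (p M : ℕ) (hp : p.Prime) (hM : 1 ≤ M) (hpM : ¬ p ∣ M) (k : ℤ)
    (χ : DirichletCharacter ℂ M) (f : ℍ → ℂ)
    (hf : ∀ γ : SL(2, ℤ), γ ∈ CongruenceSubgroup.Gamma0 M →
      f ∣[k] γ = χ (((γ : Matrix (Fin 2) (Fin 2) ℤ) 1 1 : ℤ) : ZMod M) • f)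
    (β γ₀ : ℤ) (hβ : (p : ℤ) * β - (M : ℤ) * γ₀ = 1)
    (W : GL(2, ℝ)⁺)
    (hW : ((W : GL (Fin 2) ℝ) : Matrix (Fin 2) (Fin 2) ℝ) =
      !![(p : ℝ) * β, 1; (p : ℝ) * M * γ₀, (p : ℝ)]) :
    ∀ z : ℍ, ∑ s ∈ Finset.range p,
        (f ∣[k] (W : GL (Fin 2) ℝ)) (shiftDivH p (by exact_mod_cast hp.pos) s z) =
      (p : ℂ) ^ k * χ ((p : ℕ) : ZMod M) * f z := by
  intro z
  have hp0 : (p : ℂ) ≠ 0 := Nat.cast_ne_zero.mpr hp.ne_zero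
  have hkey : ∀ s ∈ Finset.range p,
      (f ∣[k] (W : GL (Fin 2) ℝ)) (shiftDivH p (by exact_mod_cast hp.pos) s z)
        = (p : ℂ) ^ (k - 1) * (χ ((p : ℕ) : ZMod M) * f z) := by
    intro s _
    set w : ℍ := shiftDivH p (by exact_mod_cast hp.pos) s z with hw
    have hwc : (w : ℂ) = ((z : ℂ) + (s : ℂ)) / (p : ℂ) := rfl
    set γs : SL(2, ℤ) := ⟨!![β, β * s + 1; (M : ℤ) * γ₀, (M : ℤ) * γ₀ * s + p], by
      rw [Matrix.det_fin_two_of]; push_cast; linear_combination hβ⟩ with hγs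
    have hmem : γs ∈ CongruenceSubgroup.Gamma0 M := by
      rw [CongruenceSubgroup.Gamma0_mem]
      show (((M : ℤ) * γ₀ : ℤ) : ZMod M) = 0
      push_cast
      simp [ZMod.natCast_self]
    -- determinant of W
    have hdetW : ((((W : GL (Fin 2) ℝ) : Matrix (Fin 2) (Fin 2) ℝ)).det : ℝ) = (p : ℝ) := by
      rw [hW, Matrix.det_fin_two_of]
      have : ((p : ℤ) * β - (M : ℤ) * γ₀ : ℤ) = (1 : ℤ) := hβ
      have h2 : ((p : ℝ)) * (β : ℝ) - (M : ℝ) * (γ₀ : ℝ) = 1 := by exact_mod_cast this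
      nlinarith [h2]
    -- denominators agree
    have hdenom : denom (W : GL (Fin 2) ℝ) w = denom (γs : GL (Fin 2) ℝ) z := by
      simp only [denom, hW, Matrix.SpecialLinearGroup.coe_GL_coe_matrix,
        Matrix.SpecialLinearGroup.map_apply_coe, RingHom.mapMatrix_apply, Matrix.map_apply,
        Int.coe_castRingHom]
      simp only [Matrix.of_apply, Matrix.cons_val', Matrix.cons_val_zero, Matrix.cons_val_one,
        Matrix.head_cons, Matrix.head_fin_const, ModularGroup.coe_apply_complex, hγs]
      rw [hwc]
      push_cast
      field_simp
      ring
    -- numerators agree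
    have hnum : num (W : GL (Fin 2) ℝ) w = num (γs : GL (Fin 2) ℝ) z := by
      simp only [num, hW, Matrix.SpecialLinearGroup.coe_GL_coe_matrix,
        Matrix.SpecialLinearGroup.map_apply_coe, RingHom.mapMatrix_apply, Matrix.map_apply,
        Int.coe_castRingHom]
      simp only [Matrix.of_apply, Matrix.cons_val', Matrix.cons_val_zero, Matrix.cons_val_one,
        Matrix.head_cons, Matrix.head_fin_const, ModularGroup.coe_apply_complex, hγs]
      rw [hwc]
      push_cast
      field_simp
      ring
    -- the moebius actions agree
    have hWpos : 0 < ((W : GL (Fin 2) ℝ).det).val := by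
      rw [Matrix.GeneralLinearGroup.val_det_apply, hdetW]; exact_mod_cast hp.pos
    have hsmul : (W : GL (Fin 2) ℝ) • w = (γs : GL (Fin 2) ℝ) • z := by
      ext1
      rw [coe_smul_of_det_pos hWpos, coe_smul_of_det_pos (by simp), hnum, hdenom]
    -- the invariance property evaluated at z
    have hinv : f ((γs : GL (Fin 2) ℝ) • z) * denom (γs : GL (Fin 2) ℝ) z ^ (-k)
        = χ ((p : ℕ) : ZMod M) * f z := by
      have h1 := congrFun (hf γs hmem) z
      have hχarg : ((((γs : Matrix (Fin 2) (Fin 2) ℤ) 1 1 : ℤ)) : ZMod M)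
          = ((p : ℕ) : ZMod M) := by
        show ((((M : ℤ) * γ₀ * s + p : ℤ)) : ZMod M) = ((p : ℕ) : ZMod M)
        push_cast
        simp [ZMod.natCast_self]
      rw [SL_slash_apply] at h1
      simp only [Pi.smul_apply, smul_eq_mul, hχarg] at h1
      exact h1
    -- compute the slash of W at w
    rw [slash_apply, hsmul, hdenom, Matrix.GeneralLinearGroup.val_det_apply, hdetW, Nat.abs_cast, σ,
      if_pos hWpos, ContinuousAlgEquiv.refl_apply]
    push_cast
    rw [← hinv]
    ring
  rw [Finset.sum_congr rfl hkey, Finset.sum_const, Finset.card_range, nsmul_eq_mul]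
  have : (p : ℂ) ^ k = (p : ℂ) * (p : ℂ) ^ (k - 1) := by
    rw [zpow_sub_one₀ hp0]
    field_simp
  rw [this]
  ring
end
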